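/- arXiv:2103.11876 — 6 statements merged into one kernel-verified Lean document; each statement's English description precedes it below -/
import Mathlib

section
/- For all positive integers p and r, Σ_{n=1}^∞ h_n^{(-r)}/n^p = ζ(p+1) + Σ_{k=1}^r (-1)^k C(r,k) { H_k/k^p + Σ_{j=2}^p (H_k^{(j)} - ζ(j)) / k^{p+1-j} }. -/
open Finset

/-- Generalized harmonic number `H_n^(r) = ∑_{k=1}^n 1/k^r`. -/
noncomputable def Hgen (r n : ℕ) : ℝ := ∑ k ∈ Finset.Icc 1 n, (1 : ℝ) / (k : ℝ) ^ r

/-- Hyperharmonic numbers of non-negative order: `hpos 0 n = 1/n`,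
`hpos (r+1) n = ∑_{k=1}^n hpos r k`.  In particular `hpos 1 n = H_n`. -/
noncomputable def hpos : ℕ → ℕ → ℝ
  | 0, n => 1 / (n : ℝ)
  | r + 1, n => ∑ k ∈ Finset.Icc 1 n, hpos r k

/-- Hyperharmonic numbers of negative order: `hneg r n = h_n^(-r)` for `r ≥ 1`. -/
noncomputable def hneg (r n : ℕ) : ℝ :=
  if r < n then (-1 : ℝ) ^ r / (((n - r : ℕ) : ℝ) * (Nat.choose n r : ℝ))
  else ∑ k ∈ Finset.range n, (Nat.choose r k : ℝ) * (-1 : ℝ) ^ k / ((n - k : ℕ) : ℝ)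

/-- Hyperharmonic numbers of arbitrary integer order. -/
noncomputable def hh (r : ℤ) (n : ℕ) : ℝ :=
  if 0 ≤ r then hpos r.toNat n else hneg (-r).toNat n

/-- Riemann zeta value `ζ(k) = ∑_{n=1}^∞ 1/n^k`. -/
noncomputable def zetaVal (k : ℕ) : ℝ := ∑' n : ℕ, 1 / ((n : ℝ) + 1) ^ k

/-- Linear Euler sum `ζ_{H^(s)}(t) = ∑_{n=1}^∞ H_n^(s)/n^t`. -/
noncomputable def eulerSum (s t : ℕ) : ℝ := ∑' n : ℕ, Hgen s (n + 1) / ((n : ℝ) + 1) ^ t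

/-- The set of Riemann zeta values `ζ(k)`, `k ≥ 2`. -/
def zetaSet : Set ℝ := {x | ∃ k : ℕ, 2 ≤ k ∧ x = zetaVal k}

/-- The set of Riemann zeta values together with linear Euler sums. -/
def zetaEulerSet : Set ℝ :=
  zetaSet ∪ {x | ∃ s t : ℕ, 1 ≤ s ∧ 2 ≤ t ∧ x = eulerSum s t}

lemma summ_pow {j : ℕ} (hj : 2 ≤ j) : Summable (fun n : ℕ => 1 / ((n : ℝ) + 1) ^ j) := by
  have := (Real.summable_one_div_nat_pow (p := j)).2 (by omega)
  have h2 := (summable_nat_add_iff (f := fun n : ℕ => 1 / (n : ℝ) ^ j) 1).2 this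
  refine h2.congr fun n => by push_cast; ring_nf

lemma Hgen_eq_range (j k : ℕ) : Hgen j k = ∑ n ∈ range k, 1 / ((n : ℝ) + 1) ^ j := by
  unfold Hgen
  rw [← Finset.Ico_add_one_right_eq_Icc, Finset.sum_Ico_eq_sum_range]
  refine Finset.sum_congr (by norm_num) fun i _ => by push_cast; ring_nf

lemma zeta_tail {j : ℕ} (hj : 2 ≤ j) (k : ℕ) :
    (∑' m : ℕ, 1 / ((m : ℝ) + k + 1) ^ j) = zetaVal j - Hgen j k := by
  have h := Summable.sum_add_tsum_nat_add (f := fun n : ℕ => 1 / ((n : ℝ) + 1) ^ j) k (summ_pow hj)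
  have e : (∑' m : ℕ, 1 / ((m : ℝ) + k + 1) ^ j)
      = ∑' m : ℕ, 1 / (((m + k : ℕ) : ℝ) + 1) ^ j := by
    congr 1; funext m; push_cast; ring_nf
  rw [e, Hgen_eq_range, zetaVal, eq_sub_iff_add_eq, add_comm]
  exact h

lemma tendsto_inv_shift (c : ℝ) :
    Filter.Tendsto (fun n : ℕ => 1 / ((n : ℝ) + c)) Filter.atTop (nhds 0) := by
  simp only [one_div]
  exact Filter.Tendsto.inv_tendsto_atTop
    (Filter.tendsto_atTop_add_const_right _ c tendsto_natCast_atTop_atTop)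

lemma hasSum_tel (c : ℝ) (hc : 1 ≤ c) :
    HasSum (fun m : ℕ => 1 / ((m : ℝ) + c) - 1 / ((m : ℝ) + 1 + c)) (1 / c) := by
  have hc0 : (0:ℝ) < c := by linarith
  have hnn : ∀ m : ℕ, (0:ℝ) ≤ 1 / ((m : ℝ) + c) - 1 / ((m : ℝ) + 1 + c) := by
    intro m
    have h1 : (0:ℝ) < (m : ℝ) + c := by positivity
    have : 1 / ((m : ℝ) + 1 + c) ≤ 1 / ((m : ℝ) + c) := by
      apply one_div_le_one_div_of_le h1; linarith
    linarith
  rw [hasSum_iff_tendsto_nat_of_nonneg hnn]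
  have key : ∀ n : ℕ, ∑ i ∈ range n, (1 / ((i : ℝ) + c) - 1 / ((i : ℝ) + 1 + c))
      = 1 / c - 1 / ((n : ℝ) + c) := by
    intro n
    have h0 := Finset.sum_range_sub' (fun i : ℕ => 1 / ((i : ℝ) + c)) n
    have h1 : ∑ i ∈ range n, (1 / ((i : ℝ) + c) - 1 / ((i : ℝ) + 1 + c))
        = ∑ i ∈ range n, (1 / ((i : ℝ) + c) - 1 / (((i+1 : ℕ) : ℝ) + c)) :=
      Finset.sum_congr rfl fun i _ => by push_cast; ring_nf
    rw [h1, h0]; norm_num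
  simp only [key]
  have := (tendsto_const_nhds (x := 1 / c) (f := Filter.atTop (α := ℕ))).sub (tendsto_inv_shift c)
  simpa using this

lemma hasSum_tel_k (k : ℕ) :
    HasSum (fun m : ℕ => 1 / ((m : ℝ) + 1) - 1 / ((m : ℝ) + k + 1)) (Hgen 1 k) := by
  have h : ∀ m : ℕ, ∑ i ∈ range k, (1 / ((m : ℝ) + i + 1) - 1 / ((m : ℝ) + (i+1) + 1))
      = 1 / ((m : ℝ) + 1) - 1 / ((m : ℝ) + k + 1) := by
    intro m
    have h0 := Finset.sum_range_sub' (fun i : ℕ => 1 / ((m : ℝ) + i + 1)) k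
    have h1 : ∑ i ∈ range k, (1 / ((m : ℝ) + i + 1) - 1 / ((m : ℝ) + (i+1) + 1))
        = ∑ i ∈ range k, (1 / ((m : ℝ) + i + 1) - 1 / ((m : ℝ) + ((i+1 : ℕ) : ℝ) + 1)) :=
      Finset.sum_congr rfl fun i _ => by push_cast; ring_nf
    rw [h1, h0]; norm_num
  have hs : HasSum (fun m : ℕ => ∑ i ∈ range k,
      (1 / ((m : ℝ) + i + 1) - 1 / ((m : ℝ) + (i+1) + 1))) (∑ i ∈ range k, 1 / ((i : ℝ) + 1)) := by
    apply hasSum_sum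
    intro i _
    have hhc : (1:ℝ) ≤ (i : ℝ) + 1 := by
      have := Nat.cast_nonneg (α := ℝ) i; linarith
    exact (hasSum_tel ((i : ℝ) + 1) hhc).congr_fun fun m => by push_cast; ring_nf
  have := hs.congr_fun fun m => (h m).symm
  rw [Hgen_eq_range]
  convert this using 2 with i
  rw [pow_one]

lemma summ_tail {j : ℕ} (hj : 2 ≤ j) (k : ℕ) :
    Summable (fun m : ℕ => 1 / ((m : ℝ) + k + 1) ^ j) := by
  have := (summable_nat_add_iff (f := fun n : ℕ => 1 / ((n : ℝ) + 1) ^ j) k).2 (summ_pow hj)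
  exact this.congr fun m => by push_cast; ring_nf

lemma summF (k p : ℕ) (hp : 1 ≤ p) :
    Summable (fun m : ℕ => 1 / (((m : ℝ) + 1) * ((m : ℝ) + k + 1) ^ p)) := by
  refine Summable.of_nonneg_of_le (fun m => by positivity) (fun m => ?_) (summ_pow le_rfl)
  have h1 : (0:ℝ) < (m : ℝ) + 1 := by positivity
  have h2 : ((m : ℝ) + 1) ^ 2 ≤ ((m : ℝ) + 1) * ((m : ℝ) + k + 1) ^ p := by
    have hb : (1:ℝ) ≤ (m : ℝ) + k + 1 := by
      have := Nat.cast_nonneg (α := ℝ) m; have := Nat.cast_nonneg (α := ℝ) k; linarith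
    have : (m : ℝ) + k + 1 ≤ ((m : ℝ) + k + 1) ^ p := le_self_pow₀ hb (by omega)
    have hmk : (m : ℝ) + 1 ≤ (m : ℝ) + k + 1 := by
      have := Nat.cast_nonneg (α := ℝ) k; linarith
    nlinarith
  exact one_div_le_one_div_of_le (by positivity) h2

lemma Fk (k : ℕ) (hk : 1 ≤ k) : ∀ p : ℕ, 1 ≤ p →
    (∑' m : ℕ, 1 / (((m : ℝ) + 1) * ((m : ℝ) + k + 1) ^ p)) =
      Hgen 1 k / (k : ℝ) ^ p +
        ∑ j ∈ Finset.Icc 2 p, (Hgen j k - zetaVal j) / (k : ℝ) ^ (p + 1 - j) := by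
  have hk0 : (0:ℝ) < (k : ℝ) := by exact_mod_cast hk
  have hkne : (k : ℝ) ≠ 0 := ne_of_gt hk0
  intro p
  induction p with
  | zero => omega
  | succ p ih =>
    intro _
    rcases Nat.eq_zero_or_pos p with hp0 | hp1
    · subst hp0
      have hpt : ∀ m : ℕ, 1 / (((m : ℝ) + 1) * ((m : ℝ) + k + 1) ^ 1)
          = (1 / (k : ℝ)) * (1 / ((m : ℝ) + 1) - 1 / ((m : ℝ) + k + 1)) := by
        intro m
        have h1 : (0:ℝ) < (m : ℝ) + 1 := by positivity
        have h2 : (0:ℝ) < (m : ℝ) + k + 1 := by positivity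
        field_simp
        ring
      rw [tsum_congr hpt, tsum_mul_left, (hasSum_tel_k k).tsum_eq]
      simp [div_eq_mul_inv, mul_comm]
    · -- inductive step
      have hpt : ∀ m : ℕ, 1 / (((m : ℝ) + 1) * ((m : ℝ) + k + 1) ^ (p + 1))
          = (1 / (k : ℝ)) * (1 / (((m : ℝ) + 1) * ((m : ℝ) + k + 1) ^ p)
              - 1 / ((m : ℝ) + k + 1) ^ (p + 1)) := by
        intro m
        have h1 : (0:ℝ) < (m : ℝ) + 1 := by positivity
        have h2 : (0:ℝ) < (m : ℝ) + k + 1 := by positivity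
        have h3 : ((m : ℝ) + k + 1) ^ p ≠ 0 := by positivity
        rw [pow_succ]
        field_simp
        ring
      have hg := summF k p hp1
      have hh := summ_tail (j := p + 1) (by omega) k
      rw [tsum_congr hpt, tsum_mul_left, Summable.tsum_sub hg hh, ih hp1,
        zeta_tail (by omega) k]
      -- now pure algebra
      rw [Finset.sum_Icc_succ_top (by omega : 2 ≤ p + 1)]
      have hexp : ∀ j ∈ Finset.Icc 2 p,
          (Hgen j k - zetaVal j) / (k : ℝ) ^ (p + 1 + 1 - j)
            = (1 / (k : ℝ)) * ((Hgen j k - zetaVal j) / (k : ℝ) ^ (p + 1 - j)) := by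
        intro j hj
        rw [Finset.mem_Icc] at hj
        have : p + 1 + 1 - j = (p + 1 - j) + 1 := by omega
        rw [this, pow_succ]
        ring
      rw [Finset.sum_congr rfl hexp, ← Finset.mul_sum]
      have : p + 1 + 1 - (p + 1) = 1 := by omega
      rw [this, pow_one, pow_succ]
      field_simp
      ring

lemma key_id (r : ℕ) : ∀ x : ℝ, 0 < x →
    ∑ k ∈ range (r + 1), (-1 : ℝ) ^ k * (r.choose k : ℝ) / (x + k)
      = (r.factorial : ℝ) / ∏ j ∈ range (r + 1), (x + j) := by
  induction r with
  | zero => intro x hx; simp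
  | succ r ih =>
    intro x hx
    have hprodpos : ∀ (y : ℝ), 0 < y → (0:ℝ) < ∏ j ∈ range (r + 1), (y + j) := by
      intro y hy
      exact Finset.prod_pos fun j _ => by positivity
    -- split the sum
    have hsplit := Finset.sum_range_succ' (fun k => (-1 : ℝ) ^ k * ((r+1).choose k : ℝ) / (x + k)) (r + 1)
    rw [hsplit]
    have hterm : ∀ i ∈ range (r + 1),
        (-1 : ℝ) ^ (i+1) * ((r+1).choose (i+1) : ℝ) / (x + (i+1 : ℕ))
          = -((-1 : ℝ) ^ i * (r.choose i : ℝ) / ((x+1) + i))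
            + -((-1 : ℝ) ^ i * (r.choose (i+1) : ℝ) / (x + (i+1 : ℕ))) := by
      intro i _
      rw [Nat.choose_succ_succ]
      push_cast
      ring
    rw [Finset.sum_congr rfl hterm, Finset.sum_add_distrib]
    have hA := ih x hx
    have hB := ih (x + 1) (by linarith)
    -- second sum plus the k=0 term equals the sum for r at x
    have hsecond : (∑ i ∈ range (r + 1), -((-1 : ℝ) ^ i * (r.choose (i+1) : ℝ) / (x + (i+1 : ℕ))))
        + (-1 : ℝ) ^ 0 * ((r+1).choose 0 : ℝ) / (x + (0 : ℕ))
        = ∑ k ∈ range (r + 1), (-1 : ℝ) ^ k * (r.choose k : ℝ) / (x + k) := by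
      have h1 := Finset.sum_range_succ' (fun k => (-1 : ℝ) ^ k * (r.choose k : ℝ) / (x + k)) (r + 1)
      have h2 := Finset.sum_range_succ (fun k => (-1 : ℝ) ^ k * (r.choose k : ℝ) / (x + k)) (r + 1)
      have htop : (-1 : ℝ) ^ (r+1) * (r.choose (r+1) : ℝ) / (x + (r+1 : ℕ)) = 0 := by
        rw [Nat.choose_succ_self]; simp
      have hstep : ∀ i ∈ range (r + 1),
          -((-1 : ℝ) ^ i * (r.choose (i+1) : ℝ) / (x + (i+1 : ℕ)))
            = (-1 : ℝ) ^ (i+1) * (r.choose (i+1) : ℝ) / (x + ((i+1 : ℕ) : ℝ)) := by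
        intro i _; push_cast; ring
      rw [Finset.sum_congr rfl hstep]
      have h0 : (-1 : ℝ) ^ 0 * (((r+1).choose 0 : ℕ) : ℝ) / (x + ((0:ℕ) : ℝ))
          = (-1 : ℝ) ^ 0 * ((r.choose 0 : ℕ) : ℝ) / (x + ((0:ℕ) : ℝ)) := by norm_num
      rw [h0, ← h1, h2, htop, add_zero]
    -- rearrange and finish
    have hfirst : ∀ i ∈ range (r + 1),
        -((-1 : ℝ) ^ i * (r.choose i : ℝ) / ((x+1) + i)) = -((fun k => (-1 : ℝ) ^ k * (r.choose k : ℝ) / ((x+1) + k)) i) :=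
      fun i _ => rfl
    rw [add_assoc, hsecond, Finset.sum_neg_distrib, hB, hA]
    have hPA : ∏ j ∈ range (r+1+1), (x + (j:ℝ)) = (∏ j ∈ range (r+1), (x + (j:ℝ))) * (x + ((r+1:ℕ):ℝ)) :=
      Finset.prod_range_succ _ _
    have hPB : ∏ j ∈ range (r+1+1), (x + (j:ℝ)) = (∏ j ∈ range (r+1), (x + 1 + (j:ℝ))) * x := by
      have h := Finset.prod_range_succ' (fun j : ℕ => x + (j:ℝ)) (r+1)
      rw [h]
      simp only [Nat.cast_zero, add_zero, Nat.cast_add, Nat.cast_one]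
      exact congrArg (· * x) (Finset.prod_congr rfl fun j _ => by ring)
    have hApos := hprodpos x hx
    have hBpos := hprodpos (x+1) (by linarith)
    have hAne : (∏ j ∈ range (r+1), (x + (j:ℝ))) ≠ 0 := ne_of_gt hApos
    have hBne : (∏ j ∈ range (r+1), (x + 1 + (j:ℝ))) ≠ 0 := ne_of_gt hBpos
    have hBA : (∏ j ∈ range (r+1), (x + 1 + (j:ℝ))) * x
        = (∏ j ∈ range (r+1), (x + (j:ℝ))) * (x + ((r+1:ℕ):ℝ)) := by rw [← hPB, hPA]
    rw [hPA, Nat.factorial_succ]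
    have hxne : x ≠ 0 := ne_of_gt hx
    have hxc : x + ((r+1:ℕ):ℝ) ≠ 0 := by push_cast; positivity
    field_simp
    push_cast
    push_cast at hBA
    linear_combination (r.factorial : ℝ) * hBA


lemma prod_asc : ∀ q a : ℕ, (∏ j ∈ range (q+1), (a+1+j)) * a.factorial = (a+q+1).factorial := by
  intro q
  induction q with
  | zero => intro a; simp [Nat.factorial_succ, mul_comm]
  | succ q ih =>
    intro a
    rw [Finset.prod_range_succ, mul_right_comm, ih a]
    have h7 : a + (q+1) + 1 = (a + q + 1) + 1 := by omega
    have h8 : a + 1 + (q + 1) = (a + q + 1) + 1 := by omega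
    rw [h7, h8]
    generalize a + q + 1 = m
    rw [Nat.factorial_succ]
    ring

lemma hneg_eq (r n : ℕ) :
    hneg r n = ∑ k ∈ range n, (r.choose k : ℝ) * (-1 : ℝ) ^ k / ((n - k : ℕ) : ℝ) := by
  unfold hneg
  by_cases h : r < n
  · rw [if_pos h]
    -- restrict sum to range (r+1)
    have hsub : range (r+1) ⊆ range n := Finset.range_subset_range.2 (by omega)
    have hz : ∀ k ∈ range n, k ∉ range (r+1) →
        (r.choose k : ℝ) * (-1 : ℝ) ^ k / ((n - k : ℕ) : ℝ) = 0 := by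
      intro k _ hk
      rw [Finset.mem_range, not_lt] at hk
      rw [Nat.choose_eq_zero_of_lt (by omega)]
      simp
    rw [← Finset.sum_subset hsub hz]
    -- reflect
    have hrefl := Finset.sum_range_reflect
      (fun k => (r.choose k : ℝ) * (-1 : ℝ) ^ k / ((n - k : ℕ) : ℝ)) (r+1)
    rw [← hrefl]
    have hterm : ∀ j ∈ range (r+1),
        (r.choose (r + 1 - 1 - j) : ℝ) * (-1 : ℝ) ^ (r + 1 - 1 - j) / ((n - (r + 1 - 1 - j) : ℕ) : ℝ)
          = (-1 : ℝ) ^ r * ((-1 : ℝ) ^ j * (r.choose j : ℝ) / (((n - r : ℕ) : ℝ) + j)) := by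
      intro j hj
      rw [Finset.mem_range] at hj
      have hjr : j ≤ r := by omega
      have h1 : r + 1 - 1 - j = r - j := by omega
      rw [h1, Nat.choose_symm hjr]
      obtain ⟨d, hd⟩ : ∃ d, r = j + d := ⟨r - j, by omega⟩
      subst hd
      have h2 : j + d - j = d := by omega
      have h3 : n - d = (n - (j + d)) + j := by omega
      rw [h2, h3]
      push_cast
      have hsq : ((-1 : ℝ)) ^ j * (-1 : ℝ) ^ j = 1 := by
        rw [← pow_add]; exact Even.neg_one_pow ⟨j, by omega⟩
      have hpow : ((-1:ℝ)) ^ (j + d) * (-1 : ℝ) ^ j = (-1 : ℝ) ^ d := by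
        rw [pow_add, mul_right_comm, hsq, one_mul]
      linear_combination (-((((j + d).choose j : ℕ) : ℝ) / ((((n - (j + d) : ℕ)) : ℝ) + (j : ℝ)))) * hpow
    rw [Finset.sum_congr rfl hterm, ← Finset.mul_sum]
    have hx : (0:ℝ) < ((n - r : ℕ) : ℝ) := by
      have : 0 < n - r := by omega
      exact_mod_cast this
    rw [key_id r ((n - r : ℕ) : ℝ) hx]
    -- product identity
    have hnat : (∏ j ∈ range (r+1), ((n - r) + j)) = n.choose r * r.factorial * (n - r) := by
      have h1 := prod_asc r (n - r - 1)
      have h2 : n - r - 1 + 1 = n - r := by omega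
      have h3 : n - r - 1 + r + 1 = n := by omega
      rw [h2, h3] at h1
      have h4 : n.factorial = n.choose r * r.factorial * (n - r).factorial :=
        (Nat.choose_mul_factorial_mul_factorial (by omega : r ≤ n)).symm
      have h5 : (n - r).factorial = (n - r) * (n - r - 1).factorial := by
        rw [← h2, Nat.factorial_succ, h2]
      rw [h4, h5] at h1
      have h6 : 0 < (n - r - 1).factorial := Nat.factorial_pos _
      exact Nat.eq_of_mul_eq_mul_right h6 (by linarith [h1])
    have hprod : (∏ j ∈ range (r+1), (((n - r : ℕ) : ℝ) + j))
        = ((n.choose r * r.factorial * (n - r) : ℕ) : ℝ) := by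
      rw [← hnat]
      push_cast
      rfl
    rw [hprod]
    have hc : (0:ℝ) < (n.choose r : ℝ) := by
      exact_mod_cast Nat.choose_pos (by omega : r ≤ n)
    have hf : (0:ℝ) < (r.factorial : ℝ) := by exact_mod_cast r.factorial_pos
    push_cast
    have h1 : ((n - r : ℕ) : ℝ) ≠ 0 := ne_of_gt hx
    field_simp
  · rw [if_neg h]

theorem stmt2 (p r : ℕ) (hp : 1 ≤ p) (hr : 1 ≤ r) :
    (∑' n : ℕ, hneg r (n + 1) / ((n + 1 : ℕ) : ℝ) ^ p) =
      zetaVal (p + 1) + ∑ k ∈ Finset.Icc 1 r, (-1 : ℝ) ^ k * (Nat.choose r k : ℝ) *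
        (Hgen 1 k / (k : ℝ) ^ p +
          ∑ j ∈ Finset.Icc 2 p, (Hgen j k - zetaVal j) / (k : ℝ) ^ (p + 1 - j)) := by
  classical
  set b : ℕ → ℕ → ℝ := fun k n =>
    if k ≤ n then 1 / ((((n - k : ℕ) : ℝ) + 1) * ((n : ℝ) + 1) ^ p) else 0 with hb
  set c : ℕ → ℝ := fun k => (-1 : ℝ) ^ k * (r.choose k : ℝ) with hc
  have hstepA : ∀ n : ℕ, hneg r (n + 1) / ((n + 1 : ℕ) : ℝ) ^ p
      = ∑ k ∈ range (r + 1), c k * b k n := by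
    intro n
    rw [hneg_eq, Finset.sum_div]
    have e1 : ∀ k ∈ range (n + 1),
        (r.choose k : ℝ) * (-1 : ℝ) ^ k / ((n + 1 - k : ℕ) : ℝ) / ((n + 1 : ℕ) : ℝ) ^ p
          = c k * b k n := by
      intro k hk
      rw [Finset.mem_range] at hk
      have hkn : k ≤ n := by omega
      have h1 : ((n + 1 - k : ℕ) : ℝ) = ((n - k : ℕ) : ℝ) + 1 := by
        have h2 : n + 1 - k = (n - k) + 1 := by omega
        rw [h2]; push_cast; ring
      rw [hb, hc]
      simp only [if_pos hkn]
      rw [h1]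
      have d1 : ((n - k : ℕ) : ℝ) + 1 ≠ 0 := by positivity
      have d2 : ((n : ℝ) + 1) ≠ 0 := by positivity
      push_cast
      field_simp
    rw [Finset.sum_congr rfl e1]
    have hsub1 : range (n + 1) ⊆ range (n + r + 1) := Finset.range_subset_range.2 (by omega)
    have hsub2 : range (r + 1) ⊆ range (n + r + 1) := Finset.range_subset_range.2 (by omega)
    rw [Finset.sum_subset hsub1 ?hz1, ← Finset.sum_subset hsub2 ?hz2]
    case hz1 =>
      intro k _ hk
      rw [Finset.mem_range, not_lt] at hk
      have hkn : ¬ k ≤ n := by omega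
      simp [hb, hkn]
    case hz2 =>
      intro k _ hk
      rw [Finset.mem_range, not_lt] at hk
      have hch : r.choose k = 0 := Nat.choose_eq_zero_of_lt (by omega)
      simp [hc, hch]
  have hsummb : ∀ k : ℕ, Summable (b k) := by
    intro k
    apply (summable_nat_add_iff k).mp
    refine (summF k p hp).congr fun m => ?_
    have hk : k ≤ m + k := by omega
    simp only [hb, if_pos hk, Nat.add_sub_cancel]
    push_cast
    ring_nf
  have hbt : ∀ k : ℕ, (∑' n : ℕ, b k n)
      = ∑' m : ℕ, 1 / (((m : ℝ) + 1) * ((m : ℝ) + k + 1) ^ p) := by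
    intro k
    rw [← Summable.sum_add_tsum_nat_add k (hsummb k)]
    have h0 : ∑ i ∈ range k, b k i = 0 := by
      apply Finset.sum_eq_zero
      intro i hi
      rw [Finset.mem_range] at hi
      simp [hb, not_le.2 hi]
    rw [h0, zero_add]
    refine tsum_congr fun m => ?_
    have hk : k ≤ m + k := by omega
    simp only [hb, if_pos hk, Nat.add_sub_cancel]
    push_cast
    ring_nf
  have hchain : (∑' n : ℕ, hneg r (n + 1) / ((n + 1 : ℕ) : ℝ) ^ p)
      = ∑ k ∈ range (r + 1),
          c k * ∑' m : ℕ, 1 / (((m : ℝ) + 1) * ((m : ℝ) + k + 1) ^ p) := by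
    rw [tsum_congr hstepA, Summable.tsum_finsetSum (fun k _ => (hsummb k).mul_left (c k))]
    refine Finset.sum_congr rfl fun k _ => ?_
    rw [tsum_mul_left, hbt k]
  rw [hchain, Finset.sum_range_succ']
  have h00 : c 0 * (∑' m : ℕ, 1 / (((m : ℝ) + 1) * ((m : ℝ) + ((0:ℕ):ℝ) + 1) ^ p)) = zetaVal (p + 1) := by
    have he : ∀ m : ℕ, 1 / (((m : ℝ) + 1) * ((m : ℝ) + ((0:ℕ):ℝ) + 1) ^ p)
        = 1 / ((m : ℝ) + 1) ^ (p + 1) := by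
      intro m; rw [pow_succ]; push_cast; ring_nf
    rw [tsum_congr he]
    simp [hc, zetaVal]
  rw [h00]
  rw [add_comm]
  congr 1
  rw [show Finset.Icc 1 r = Finset.Ico 1 (r+1) from (Finset.Ico_add_one_right_eq_Icc 1 r).symm,
    Finset.sum_Ico_eq_sum_range]
  simp only [Nat.add_sub_cancel]
  refine Finset.sum_congr rfl fun i hi => ?_
  have h1i : 1 ≤ 1 + i := by omega
  rw [Fk (i+1) (by omega) p hp]
  rw [hc]
  have hcast : ((i:ℝ) + 1) = (((i+1:ℕ)) : ℝ) := by push_cast; ring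
  have h2 : 1 + i = i + 1 := by omega
  rw [h2]
end

section
/- Let N, s, t be positive integers and let b, c be non-negative integers with b ≠ c. Then Σ_{n=1}^N 1/((n+b)^s (n+c)^t) = Σ_{j=1}^s ((-1)^{s-j}/(c-b)^{t+s-j}) C(s+t-j-1, t-1) (H_{N+b}^{(j)} - H_b^{(j)}) + Σ_{j=1}^t ((-1)^{t-j}/(b-c)^{t+s-j}) C(s+t-j-1, s-1) (H_{N+c}^{(j)} - H_c^{(j)}). -/
open Finset

lemma pfrac (x d : ℝ) (hx : x ≠ 0) (hd : d ≠ 0) (hxd : x + d ≠ 0) :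
    ∀ m s t : ℕ, s + t ≤ m →
    1 / (x ^ (s+1) * (x+d) ^ (t+1)) =
      (∑ i ∈ range (s+1), (-1:ℝ)^i / d^(t+1+i) * (Nat.choose (t+i) t : ℝ) * (1 / x^(s+1-i))) +
      ∑ i ∈ range (t+1), (-1:ℝ)^i / (-d)^(s+1+i) * (Nat.choose (s+i) s : ℝ) * (1 / (x+d)^(t+1-i)) := by
  have hnd : -d ≠ 0 := neg_ne_zero.mpr hd
  intro m
  induction m with
  | zero =>
    intro s t h
    obtain ⟨rfl, rfl⟩ : s = 0 ∧ t = 0 := by omega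
    simp only [zero_add, Finset.sum_range_one]
    norm_num
    field_simp
    ring
  | succ m ih =>
    intro s t h
    match s, t with
    | 0, 0 =>
      simp only [zero_add, Finset.sum_range_one]
      norm_num
      field_simp
      ring
    | s+1, 0 =>
      have key : 1 / (x ^ (s+1+1) * (x+d) ^ (0+1)) =
          (1/d) * (1 / x^(s+1+1)) - (1/d) * (1 / (x^(s+1) * (x+d)^(0+1))) := by
        field_simp
        ring
      rw [key, ih s 0 (by omega)]
      rw [Finset.sum_range_succ' (fun i => (-1:ℝ)^i / d^(0+1+i) * (Nat.choose (0+i) 0 : ℝ) * (1 / x^(s+1+1-i))) (s+1)]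
      have e1 : ∑ i ∈ range (s+1), (-1:ℝ)^(i+1) / d^(0+1+(i+1)) * (Nat.choose (0+(i+1)) 0 : ℝ) * (1 / x^(s+1+1-(i+1))) =
          ∑ i ∈ range (s+1), (-(1/d)) * ((-1:ℝ)^i / d^(0+1+i) * (Nat.choose (0+i) 0 : ℝ) * (1 / x^(s+1-i))) := by
        apply Finset.sum_congr rfl
        intro i _
        simp only [Nat.choose_zero_right, Nat.cast_one, Nat.succ_sub_succ]
        rw [show 0+1+(i+1) = (0+1+i)+1 by omega, pow_succ]
        field_simp
        ring
      rw [e1, ← Finset.mul_sum]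
      simp only [zero_add, Finset.sum_range_one, Nat.sub_zero, Nat.add_zero, Nat.choose_zero_right,
        Nat.choose_self, Nat.cast_one, pow_zero, one_mul]
      rw [show s+1+1 = (s+1)+1 from rfl, pow_succ (-d) (s+1)]
      field_simp
      ring
    | 0, t+1 =>
      have key : 1 / (x ^ (0+1) * (x+d) ^ (t+1+1)) =
          (1/d) * (1 / (x^(0+1) * (x+d)^(t+1))) - (1/d) * (1 / (x+d)^(t+1+1)) := by
        field_simp
        ring
      rw [key, ih 0 t (by omega)]
      rw [Finset.sum_range_succ' (fun i => (-1:ℝ)^i / (-d)^(0+1+i) * (Nat.choose (0+i) 0 : ℝ) * (1 / (x+d)^(t+1+1-i))) (t+1)]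
      have e1 : ∑ i ∈ range (t+1), (-1:ℝ)^(i+1) / (-d)^(0+1+(i+1)) * (Nat.choose (0+(i+1)) 0 : ℝ) * (1 / (x+d)^(t+1+1-(i+1))) =
          ∑ i ∈ range (t+1), (1/d) * ((-1:ℝ)^i / (-d)^(0+1+i) * (Nat.choose (0+i) 0 : ℝ) * (1 / (x+d)^(t+1-i))) := by
        apply Finset.sum_congr rfl
        intro i _
        simp only [Nat.choose_zero_right, Nat.cast_one, Nat.succ_sub_succ]
        rw [show 0+1+(i+1) = (0+1+i)+1 by omega, pow_succ]
        field_simp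
        ring
      rw [e1, ← Finset.mul_sum]
      simp only [zero_add, Finset.sum_range_one, Nat.sub_zero, Nat.add_zero, Nat.choose_zero_right,
        Nat.choose_self, Nat.cast_one, pow_zero, one_mul]
      rw [show t+1+1 = (t+1)+1 from rfl, pow_succ d (t+1)]
      field_simp
      ring
    | s+1, t+1 =>
      have key : 1 / (x ^ (s+1+1) * (x+d) ^ (t+1+1)) =
          (1/d) * (1 / (x^(s+1+1) * (x+d)^(t+1))) - (1/d) * (1 / (x^(s+1) * (x+d)^(t+1+1))) := by
        have gen : ∀ X Y : ℝ, X ≠ 0 → Y ≠ 0 →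
            1/((X*x)*(Y*(x+d))) = (1/d)*(1/((X*x)*Y)) - (1/d)*(1/(X*(Y*(x+d)))) := by
          intro X Y hX hY
          field_simp
          ring
        rw [pow_succ x (s+1), pow_succ (x+d) (t+1)]
        exact gen (x^(s+1)) ((x+d)^(t+1)) (pow_ne_zero _ hx) (pow_ne_zero _ hxd)
      rw [key, ih (s+1) t (by omega), ih s (t+1) (by omega)]
      have eG : ∑ i ∈ range (s+1+1), ((-1:ℝ)^i / d^(t+1+1+i) * ((Nat.choose (t+i) (t+1)) : ℝ) * (1/x^(s+1+1-i)))
          = -((1/d) * ∑ i ∈ range (s+1), ((-1:ℝ)^i / d^(t+1+1+i) * ((Nat.choose (t+1+i) (t+1)) : ℝ) * (1/x^(s+1-i)))) := by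
        rw [Finset.sum_range_succ' (fun i => (-1:ℝ)^i / d^(t+1+1+i) * ((Nat.choose (t+i) (t+1)) : ℝ) * (1/x^(s+1+1-i))) (s+1)]
        simp only [Nat.add_zero, Nat.choose_succ_self, Nat.cast_zero, mul_zero, zero_mul, add_zero]
        rw [Finset.mul_sum, ← Finset.sum_neg_distrib]
        apply Finset.sum_congr rfl
        intro i _
        rw [show t+(i+1) = t+1+i by omega, Nat.succ_sub_succ, show t+1+1+(i+1) = (t+1+1+i)+1 by omega, pow_succ]
        ring
      have eA : ∑ i ∈ range (s+1+1), ((-1:ℝ)^i / d^(t+1+1+i) * ((Nat.choose (t+1+i) (t+1)) : ℝ) * (1/x^(s+1+1-i)))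
          = (1/d) * (∑ i ∈ range (s+1+1), (-1:ℝ)^i / d^(t+1+i) * ((Nat.choose (t+i) t) : ℝ) * (1/x^(s+1+1-i)))
            - (1/d) * (∑ i ∈ range (s+1), (-1:ℝ)^i / d^(t+1+1+i) * ((Nat.choose (t+1+i) (t+1)) : ℝ) * (1/x^(s+1-i))) := by
        have step : ∑ i ∈ range (s+1+1), ((-1:ℝ)^i / d^(t+1+1+i) * ((Nat.choose (t+1+i) (t+1)) : ℝ) * (1/x^(s+1+1-i)))
            = ∑ i ∈ range (s+1+1), ((1/d) * ((-1:ℝ)^i / d^(t+1+i) * ((Nat.choose (t+i) t) : ℝ) * (1/x^(s+1+1-i)))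
                + (-1:ℝ)^i / d^(t+1+1+i) * ((Nat.choose (t+i) (t+1)) : ℝ) * (1/x^(s+1+1-i))) := by
          apply Finset.sum_congr rfl
          intro i _
          rw [show t+1+i = t+i+1 by omega, Nat.choose_succ_succ, Nat.cast_add,
            show t+1+1+i = (t+i+1)+1 by omega, pow_succ]
          ring
        rw [step, Finset.sum_add_distrib, ← Finset.mul_sum, eG]
        ring
      have eH : ∑ i ∈ range (t+1+1), ((-1:ℝ)^i / (-d)^(s+1+1+i) * ((Nat.choose (s+i) (s+1)) : ℝ) * (1/(x+d)^(t+1+1-i)))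
          = (1/d) * ∑ i ∈ range (t+1), ((-1:ℝ)^i / (-d)^(s+1+1+i) * ((Nat.choose (s+1+i) (s+1)) : ℝ) * (1/(x+d)^(t+1-i))) := by
        rw [Finset.sum_range_succ' (fun i => (-1:ℝ)^i / (-d)^(s+1+1+i) * ((Nat.choose (s+i) (s+1)) : ℝ) * (1/(x+d)^(t+1+1-i))) (t+1)]
        simp only [Nat.add_zero, Nat.choose_succ_self, Nat.cast_zero, mul_zero, zero_mul, add_zero]
        rw [Finset.mul_sum]
        apply Finset.sum_congr rfl
        intro i _
        rw [show s+(i+1) = s+1+i by omega, Nat.succ_sub_succ, show s+1+1+(i+1) = (s+1+1+i)+1 by omega, pow_succ]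
        ring
      have eG2 : ∑ i ∈ range (t+1+1), ((-1:ℝ)^i / (-d)^(s+1+1+i) * ((Nat.choose (s+i) s) : ℝ) * (1/(x+d)^(t+1+1-i)))
          = -((1/d) * ∑ i ∈ range (t+1+1), ((-1:ℝ)^i / (-d)^(s+1+i) * ((Nat.choose (s+i) s) : ℝ) * (1/(x+d)^(t+1+1-i)))) := by
        rw [Finset.mul_sum, ← Finset.sum_neg_distrib]
        apply Finset.sum_congr rfl
        intro i _
        rw [show s+1+1+i = (s+1+i)+1 by omega, pow_succ]
        ring
      have eB : ∑ i ∈ range (t+1+1), ((-1:ℝ)^i / (-d)^(s+1+1+i) * ((Nat.choose (s+1+i) (s+1)) : ℝ) * (1/(x+d)^(t+1+1-i)))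
          = (1/d) * (∑ i ∈ range (t+1), (-1:ℝ)^i / (-d)^(s+1+1+i) * ((Nat.choose (s+1+i) (s+1)) : ℝ) * (1/(x+d)^(t+1-i)))
            - (1/d) * (∑ i ∈ range (t+1+1), (-1:ℝ)^i / (-d)^(s+1+i) * ((Nat.choose (s+i) s) : ℝ) * (1/(x+d)^(t+1+1-i))) := by
        have step : ∑ i ∈ range (t+1+1), ((-1:ℝ)^i / (-d)^(s+1+1+i) * ((Nat.choose (s+1+i) (s+1)) : ℝ) * (1/(x+d)^(t+1+1-i)))
            = ∑ i ∈ range (t+1+1), (((-1:ℝ)^i / (-d)^(s+1+1+i) * ((Nat.choose (s+i) (s+1)) : ℝ) * (1/(x+d)^(t+1+1-i)))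
                + ((-1:ℝ)^i / (-d)^(s+1+1+i) * ((Nat.choose (s+i) s) : ℝ) * (1/(x+d)^(t+1+1-i)))) := by
          apply Finset.sum_congr rfl
          intro i _
          rw [show s+1+i = s+i+1 by omega, Nat.choose_succ_succ, Nat.cast_add]
          ring
        rw [step, Finset.sum_add_distrib, eH, eG2]
        ring
      rw [eA, eB]
      ring

lemma Hdiff (j a N : ℕ) : Hgen j (N + a) - Hgen j a = ∑ n ∈ Finset.Icc 1 N, 1 / ((n + a : ℕ) : ℝ) ^ j := by
  have h1 : Hgen j a + ∑ k ∈ Finset.Ioc a (N + a), 1/(k:ℝ)^j = Hgen j (N+a) := by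
    unfold Hgen
    rw [show (1:ℕ) = 0+1 from rfl, Finset.Icc_add_one_left_eq_Ioc, Finset.Icc_add_one_left_eq_Ioc]
    exact Finset.sum_Ioc_consecutive _ (Nat.zero_le a) (Nat.le_add_left a N)
  have h2 : ∑ k ∈ Finset.Ioc a (N+a), 1/(k:ℝ)^j = ∑ n ∈ Finset.Icc 1 N, 1/((n+a:ℕ):ℝ)^j := by
    rw [show N + a = a + N by omega, show Finset.Ioc a (a+N) = Finset.Ioc (a+0) (a+N) by rw [Nat.add_zero],
      ← Finset.map_add_left_Ioc, Finset.sum_map]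
    rw [show Finset.Icc 1 N = Finset.Ioc 0 N from Finset.Icc_add_one_left_eq_Ioc 0 N]
    apply Finset.sum_congr rfl
    intro n _
    simp only [addLeftEmbedding_apply]
    rw [Nat.add_comm a n]
  rw [← h1, h2]
  ring

lemma reindexIcc (M : ℕ) (F : ℕ → ℝ) :
    ∑ j ∈ Finset.Icc 1 (M+1), F j = ∑ i ∈ range (M+1), F (M+1-i) := by
  rw [← Finset.Ico_add_one_right_eq_Icc, Finset.sum_Ico_eq_sum_range]
  rw [show M+1+1-1 = M+1 by omega]
  rw [← Finset.sum_range_reflect (fun i => F (1+i)) (M+1)]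
  apply Finset.sum_congr rfl
  intro i hi
  simp only [Finset.mem_range] at hi
  congr 1
  omega

theorem stmt3 (N s t : ℕ) (hN : 1 ≤ N) (hs : 1 ≤ s) (ht : 1 ≤ t)
    (b c : ℕ) (hbc : b ≠ c) :
    ∑ n ∈ Finset.Icc 1 N, 1 / (((n + b : ℕ) : ℝ) ^ s * ((n + c : ℕ) : ℝ) ^ t) =
      (∑ j ∈ Finset.Icc 1 s, (-1 : ℝ) ^ (s - j) / ((c : ℝ) - (b : ℝ)) ^ (t + s - j) *
        (Nat.choose (s + t - j - 1) (t - 1) : ℝ) * (Hgen j (N + b) - Hgen j b)) +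
      ∑ j ∈ Finset.Icc 1 t, (-1 : ℝ) ^ (t - j) / ((b : ℝ) - (c : ℝ)) ^ (t + s - j) *
        (Nat.choose (s + t - j - 1) (s - 1) : ℝ) * (Hgen j (N + c) - Hgen j c) := by
  have hd : ((c : ℝ) - (b : ℝ)) ≠ 0 := sub_ne_zero.mpr (by exact_mod_cast Ne.symm hbc)
  have main : ∀ n ∈ Finset.Icc 1 N,
      1 / (((n + b : ℕ) : ℝ) ^ s * ((n + c : ℕ) : ℝ) ^ t) =
      (∑ j ∈ Finset.Icc 1 s, (-1 : ℝ) ^ (s - j) / ((c : ℝ) - (b : ℝ)) ^ (t + s - j) *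
        (Nat.choose (s + t - j - 1) (t - 1) : ℝ) * (1 / ((n + b : ℕ) : ℝ) ^ j)) +
      ∑ j ∈ Finset.Icc 1 t, (-1 : ℝ) ^ (t - j) / ((b : ℝ) - (c : ℝ)) ^ (t + s - j) *
        (Nat.choose (s + t - j - 1) (s - 1) : ℝ) * (1 / ((n + c : ℕ) : ℝ) ^ j) := by
    intro n hn
    simp only [Finset.mem_Icc] at hn
    set x : ℝ := ((n + b : ℕ) : ℝ) with hxdef
    set d : ℝ := (c : ℝ) - (b : ℝ) with hddef
    have hceq : ((n + c : ℕ) : ℝ) = x + d := by rw [hxdef, hddef]; push_cast; ring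
    have hbceq : ((b : ℝ) - (c : ℝ)) = -d := by rw [hddef]; ring
    have hx : x ≠ 0 := by
      rw [hxdef]; exact (Nat.cast_ne_zero (R := ℝ)).mpr (by omega)
    have hxd : x + d ≠ 0 := by
      rw [← hceq]; exact (Nat.cast_ne_zero (R := ℝ)).mpr (by omega)
    obtain ⟨s', rfl⟩ : ∃ s', s = s' + 1 := ⟨s - 1, by omega⟩
    obtain ⟨t', rfl⟩ : ∃ t', t = t' + 1 := ⟨t - 1, by omega⟩
    rw [hceq, hbceq, pfrac x d hx hd hxd (s' + t') s' t' le_rfl]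
    congr 1
    · rw [reindexIcc s' _]
      apply Finset.sum_congr rfl
      intro i hi
      simp only [Finset.mem_range] at hi
      rw [show s' + 1 - (s' + 1 - i) = i by omega,
        show t' + 1 + (s' + 1) - (s' + 1 - i) = t' + 1 + i by omega,
        show s' + 1 + (t' + 1) - (s' + 1 - i) - 1 = t' + i by omega,
        show t' + 1 - 1 = t' by omega]
    · rw [reindexIcc t' _]
      apply Finset.sum_congr rfl
      intro i hi
      simp only [Finset.mem_range] at hi
      rw [show t' + 1 - (t' + 1 - i) = i by omega,
        show t' + 1 + (s' + 1) - (t' + 1 - i) = s' + 1 + i by omega,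
        show s' + 1 + (t' + 1) - (t' + 1 - i) - 1 = s' + i by omega,
        show s' + 1 - 1 = s' by omega]
  rw [Finset.sum_congr rfl main, Finset.sum_add_distrib]
  congr 1
  · rw [Finset.sum_comm]
    apply Finset.sum_congr rfl
    intro j _
    rw [Hdiff j b N, Finset.mul_sum]
  · rw [Finset.sum_comm]
    apply Finset.sum_congr rfl
    intro j _
    rw [Hdiff j c N, Finset.mul_sum]
end

section
/- Let j, l, p be positive integers and let (f_n)_{n≥1} be a real sequence such that: for every s with 0 ≤ s ≤ l, the series Σ_{n=1}^∞ f_n/((n+j)(n+s)) converges; for every m with 1 ≤ m ≤ p-1, the series Σ_{n=1}^∞ f_n/n^{p+1-m} converges; and for every m with 1 ≤ m ≤ p-1 and every a with 1 ≤ a ≤ l, the series Σ_{n=1}^∞ f_n/(n^{p-m}(n+a)) converges. Then Σ_{n=1}^∞ f_n/(n^p (n+j) C(n+l,l)) = Σ_{m=1}^{p-1} ((-1)^{m-1}/j^m) { Σ_{n=1}^∞ f_n/n^{p+1-m} + Σ_{a=1}^l (-1)^a C(l,a) Σ_{n=1}^∞ f_n/(n^{p-m}(n+a)) } + ((-1)^{p-1}/j^{p-1})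 Σ_{s=0}^l (-1)^s C(l,s) Σ_{n=1}^∞ f_n/((n+j)(n+s)). -/
open Finset

lemma sumA (l : ℕ) : ∀ (x : ℝ), 0 < x →
    ∑ s ∈ range (l+1), (-1:ℝ)^s * (l.choose s : ℝ) / (x + s)
      = (l.factorial : ℝ) / ∏ i ∈ range (l+1), (x + i) := by
  induction l with
  | zero => intro x hx; simp
  | succ l ih =>
    intro x hx
    have hx1 : (0:ℝ) < x + 1 := by linarith
    have hP : (0:ℝ) < ∏ i ∈ range (l+1), (x + i) :=
      prod_pos (fun i _ => by positivity)
    have hQ : (0:ℝ) < ∏ i ∈ range (l+1), ((x+1) + i) :=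
      prod_pos (fun i _ => by positivity)
    have key : (∏ i ∈ range (l+1), (x + i)) * (x + ((l:ℝ)+1)) =
        x * ∏ i ∈ range (l+1), ((x+1) + i) := by
      have h1 := prod_range_succ (fun i : ℕ => x + (i:ℝ)) (l+1)
      have h2 := prod_range_succ' (fun i : ℕ => x + (i:ℝ)) (l+1)
      rw [h2] at h1
      push_cast at h1
      have hQ' : ∏ i ∈ range (l+1), ((x+1) + (i:ℝ))
          = ∏ i ∈ range (l+1), (x + ((i:ℝ)+1)) :=
        prod_congr rfl (fun i _ => by ring)
      rw [hQ']
      linarith [h1]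
    have hG : ∀ s ∈ range (l+1),
        (-1:ℝ)^(s+1) * ((l+1).choose (s+1) : ℝ) / (x + ((s:ℝ)+1))
        = -((-1:ℝ)^s * (l.choose s : ℝ) / ((x+1) + s))
          + (-1:ℝ)^(s+1) * (l.choose (s+1) : ℝ) / (x + ((s:ℝ)+1)) := by
      intro s hs
      rw [Nat.choose_succ_succ]
      have h : x + ((s:ℝ)+1) ≠ 0 := by positivity
      have h' : (x+1) + (s:ℝ) ≠ 0 := by positivity
      push_cast
      field_simp
      ring
    have c2 : ∑ s ∈ range (l+1), (-1:ℝ)^(s+1) * (l.choose (s+1) : ℝ) / (x + ((s:ℝ)+1))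
        = (∑ s ∈ range (l+1), (-1:ℝ)^s * (l.choose s : ℝ) / (x + s)) - 1/x := by
      have h3 := sum_range_succ' (fun s => (-1:ℝ)^s * ((l).choose s : ℝ) / (x + s)) (l+1)
      have h4 := sum_range_succ (fun s => (-1:ℝ)^s * ((l).choose s : ℝ) / (x + s)) (l+1)
      rw [h4] at h3
      push_cast at h3 ⊢
      simp only [Nat.choose_succ_self, Nat.cast_zero, mul_zero, zero_mul, zero_div, add_zero,
        pow_zero, Nat.choose_zero_right, Nat.cast_one, mul_one, one_mul] at h3
      linarith [h3]
    have hsplit : ∑ s ∈ range (l+2), (-1:ℝ)^s * ((l+1).choose s : ℝ) / (x + s)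
        = (∑ s ∈ range (l+1), (-1:ℝ)^s * (l.choose s : ℝ) / (x + s))
          - ∑ s ∈ range (l+1), (-1:ℝ)^s * (l.choose s : ℝ) / ((x+1) + s) := by
      have h5 := sum_range_succ' (fun s => (-1:ℝ)^s * ((l+1).choose s : ℝ) / (x + s)) (l+1)
      push_cast at h5
      rw [h5]
      have c1 : ∑ s ∈ range (l+1), (-1:ℝ)^(s+1) * ((l+1).choose (s+1) : ℝ) / (x + ((s:ℝ)+1))
          = ∑ s ∈ range (l+1), (-((-1:ℝ)^s * (l.choose s : ℝ) / ((x+1) + s))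
              + (-1:ℝ)^(s+1) * (l.choose (s+1) : ℝ) / (x + ((s:ℝ)+1))) :=
        sum_congr rfl hG
      rw [c1, sum_add_distrib, sum_neg_distrib, c2]
      simp
      ring
    push_cast at hsplit ⊢
    rw [hsplit, ih x hx, ih (x+1) hx1]
    have hprod : ∏ i ∈ range (l+2), (x + (i:ℝ))
        = (∏ i ∈ range (l+1), (x + i)) * (x + ((l:ℝ)+1)) := by
      have := prod_range_succ (fun i : ℕ => x + (i:ℝ)) (l+1)
      rw [this]; push_cast; ring
    push_cast at hprod
    rw [hprod]
    have hne1 : (∏ i ∈ range (l+1), (x + (i:ℝ))) ≠ 0 := ne_of_gt hP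
    have hne2 : (∏ i ∈ range (l+1), ((x+1) + (i:ℝ))) ≠ 0 := ne_of_gt hQ
    have hne3 : x + ((l:ℝ)+1) ≠ 0 := by positivity
    have hQeq : (l.factorial:ℝ) / ∏ i ∈ range (l+1), ((x+1) + (i:ℝ))
        = (l.factorial:ℝ) * x / ((∏ i ∈ range (l+1), (x + (i:ℝ))) * (x + ((l:ℝ)+1))) := by
      rw [div_eq_div_iff hne2 (by positivity)]
      linear_combination (l.factorial:ℝ) * key
    rw [hQeq]
    have hfac : ((l+1).factorial : ℝ) = ((l:ℝ)+1) * (l.factorial : ℝ) := by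
      rw [Nat.factorial_succ]; push_cast; ring
    push_cast [hfac]
    field_simp
    ring


lemma sumB (p j : ℕ) (x : ℝ) (hx : 0 < x) (hj : 1 ≤ j) :
    1/(x^(p-1) * (x + j)) =
      (∑ i ∈ range (p-1), (-1:ℝ)^i / ((j:ℝ)^(i+1) * x^(p-1-i)))
        + (-1:ℝ)^(p-1)/((j:ℝ)^(p-1)*(x+j)) := by
  have hjR : (0:ℝ) < (j:ℝ) := by exact_mod_cast Nat.lt_of_lt_of_le Nat.zero_lt_one hj
  have hxj : (0:ℝ) < x + j := by positivity
  set A : ℕ → ℝ := fun i => (-1:ℝ)^i / ((j:ℝ)^i * x^(p-1-i) * (x+j)) with hA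
  have htel := sum_range_sub' A (p-1)
  have hterm : ∀ i ∈ range (p-1),
      A i - A (i+1) = (-1:ℝ)^i / ((j:ℝ)^(i+1) * x^(p-1-i)) := by
    intro i hi
    rw [mem_range] at hi
    have hk : p-1-i = (p-1-(i+1))+1 := by omega
    simp only [hA]
    rw [hk, pow_succ]
    have h1 : ((j:ℝ)^i) ≠ 0 := by positivity
    have h2 : ((j:ℝ)^(i+1)) ≠ 0 := by positivity
    have h3 : x^(p-1-(i+1)) ≠ 0 := by positivity
    field_simp
    ring
  rw [← sum_congr rfl hterm, htel]
  simp only [hA, Nat.sub_self, Nat.sub_zero, pow_zero, one_mul, mul_one]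
  ring


lemma hKprod (n l : ℕ) :
    ∏ i ∈ range (l+1), (((n:ℝ)+1) + i)
      = ((n:ℝ)+1) * (((n+1+l).choose l : ℕ) : ℝ) * (l.factorial : ℝ) := by
  induction l with
  | zero => simp
  | succ l ih =>
    rw [prod_range_succ, ih]
    have h := Nat.add_one_mul_choose_eq (n+l+1) l
    have h' : ((n:ℝ)+l+2) * (((n+l+1).choose l : ℕ) : ℝ)
        = (((n+l+2).choose (l+1) : ℕ) : ℝ) * ((l:ℝ)+1) := by exact_mod_cast h
    have e1 : n+1+l = n+l+1 := by omega
    have e2 : n+1+(l+1) = n+l+1+1 := by omega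
    rw [e1, e2, Nat.factorial_succ]
    push_cast
    linear_combination ((n:ℝ)+1) * (l.factorial:ℝ) * h'


lemma pointwise (j l p n : ℕ) (hj : 1 ≤ j) (hp : 1 ≤ p) (c : ℝ) :
    c / (((n + 1 : ℕ) : ℝ) ^ p * ((n + 1 + j : ℕ) : ℝ) * (Nat.choose (n + 1 + l) l : ℝ)) =
      (∑ m ∈ Icc 1 (p - 1), (-1 : ℝ) ^ (m - 1) / (j : ℝ) ^ m *
        (c / ((n + 1 : ℕ) : ℝ) ^ (p + 1 - m) +
         ∑ a ∈ Icc 1 l, (-1 : ℝ) ^ a * (l.choose a : ℝ) *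
           (c / (((n + 1 : ℕ) : ℝ) ^ (p - m) * ((n + 1 + a : ℕ) : ℝ))))) +
      (-1 : ℝ) ^ (p - 1) / (j : ℝ) ^ (p - 1) *
        ∑ s ∈ range (l + 1), (-1 : ℝ) ^ s * (l.choose s : ℝ) *
          (c / (((n + 1 + j : ℕ) : ℝ) * ((n + 1 + s : ℕ) : ℝ))) := by
  have hx : (0:ℝ) < (n:ℝ) + 1 := by positivity
  set x : ℝ := (n:ℝ) + 1 with hxdef
  have hjR : (0:ℝ) < (j:ℝ) := by exact_mod_cast Nat.lt_of_lt_of_le Nat.zero_lt_one hj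
  set K : ℝ := (((n+1+l).choose l : ℕ) : ℝ) with hKdef
  have hK0 : (0:ℝ) < K := by
    rw [hKdef]
    exact_mod_cast Nat.choose_pos (by omega)
  have hxK : 1/(x*K) = ∑ s ∈ range (l+1), (-1:ℝ)^s * (l.choose s : ℝ) / (x + s) := by
    rw [sumA l x hx, hKprod n l]
    rw [eq_div_iff (by positivity)]
    field_simp
    rfl
  have hB := sumB p j x hx hj
  -- main scalar identity
  have main : 1/(x^p * (x+(j:ℝ)) * K) =
      (∑ i ∈ range (p-1), (-1:ℝ)^i/(j:ℝ)^(i+1) *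
        ∑ s ∈ range (l+1), (-1:ℝ)^s * (l.choose s : ℝ) / (x^(p-1-i)*(x+s)))
      + (-1:ℝ)^(p-1)/(j:ℝ)^(p-1) *
        ∑ s ∈ range (l+1), (-1:ℝ)^s * (l.choose s : ℝ) / ((x+(j:ℝ))*(x+s)) := by
    have hsplitden : x^(p-1)*(x+(j:ℝ)) * (x*K) = x^p * (x+(j:ℝ)) * K := by
      have : x^p = x^(p-1) * x := by
        conv_lhs => rw [show p = (p-1)+1 by omega]
        rw [pow_succ]
      rw [this]; ring
    rw [← hsplitden, ← one_div_mul_one_div, hB, hxK, add_mul, sum_mul]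
    congr 1
    · refine sum_congr rfl (fun i hi => ?_)
      rw [mul_sum, mul_sum]
      refine sum_congr rfl (fun s hs => ?_)
      have d1 : x^(p-1-i) ≠ 0 := by positivity
      have d2 : x + (s:ℝ) ≠ 0 := by positivity
      have d3 : ((j:ℝ))^(i+1) ≠ 0 := by positivity
      rw [div_mul_div_comm, div_mul_div_comm]
      congr 1
      ring
    · rw [mul_sum, mul_sum]
      refine sum_congr rfl (fun s hs => ?_)
      have d2 : x + (s:ℝ) ≠ 0 := by positivity
      have d3 : ((j:ℝ))^(p-1) ≠ 0 := by positivity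
      have d4 : x + (j:ℝ) ≠ 0 := by positivity
      rw [div_mul_div_comm, div_mul_div_comm]
      congr 1
      ring
  -- reindex the Icc sums and collapse brackets
  push_cast
  calc c / (x ^ p * (x + (j:ℝ)) * K)
      = c * (1/(x^p * (x+(j:ℝ)) * K)) := by ring
    _ = c * ((∑ i ∈ range (p-1), (-1:ℝ)^i/(j:ℝ)^(i+1) *
            ∑ s ∈ range (l+1), (-1:ℝ)^s * (l.choose s : ℝ) / (x^(p-1-i)*(x+s)))
          + (-1:ℝ)^(p-1)/(j:ℝ)^(p-1) *
            ∑ s ∈ range (l+1), (-1:ℝ)^s * (l.choose s : ℝ) / ((x+(j:ℝ))*(x+s))) := by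
        rw [main]
    _ = (∑ i ∈ range (p-1), (-1:ℝ)^i/(j:ℝ)^(i+1) *
            ∑ s ∈ range (l+1), (-1:ℝ)^s * (l.choose s : ℝ) * (c / (x^(p-1-i)*(x+s))))
          + (-1:ℝ)^(p-1)/(j:ℝ)^(p-1) *
            ∑ s ∈ range (l+1), (-1:ℝ)^s * (l.choose s : ℝ) * (c / ((x+(j:ℝ))*(x+s))) := by
        rw [mul_add]
        congr 1
        · rw [mul_sum]
          refine sum_congr rfl (fun i hi => ?_)
          rw [mul_left_comm]
          congr 1
          rw [mul_sum]
          exact sum_congr rfl (fun s _ => by ring)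
        · rw [mul_left_comm]
          congr 1
          rw [mul_sum]
          exact sum_congr rfl (fun s _ => by ring)
    _ = (∑ m ∈ Icc 1 (p - 1), (-1 : ℝ) ^ (m - 1) / (j : ℝ) ^ m *
          (c / x ^ (p + 1 - m) +
           ∑ a ∈ Icc 1 l, (-1 : ℝ) ^ a * (l.choose a : ℝ) *
             (c / (x ^ (p - m) * (x + (a:ℝ))))))
        + (-1 : ℝ) ^ (p - 1) / (j : ℝ) ^ (p - 1) *
          ∑ s ∈ range (l + 1), (-1 : ℝ) ^ s * (l.choose s : ℝ) *
            (c / ((x + (j:ℝ)) * (x + (s:ℝ)))) := by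
        congr 1
        rw [show Icc 1 (p-1) = Ico 1 (p-1+1) from rfl, sum_Ico_eq_sum_range]
        simp only [Nat.add_sub_cancel]
        refine sum_congr rfl (fun i hi => ?_)
        rw [mem_range] at hi
        have e1 : 1 + i - 1 = i := by omega
        have e2 : p - (1+i) = p - 1 - i := by omega
        have e3 : p + 1 - (1+i) = (p-1-i) + 1 := by omega
        rw [e1, e2, e3, show 1+i = i+1 from by omega]
        congr 1
        -- bracket collapse
        rw [show Icc 1 l = Ico 1 (l+1) from rfl, sum_Ico_eq_sum_range]
        simp only [Nat.add_sub_cancel]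
        rw [sum_range_succ' (fun s => (-1:ℝ)^s * (l.choose s : ℝ) * (c / (x^(p-1-i)*(x+(s:ℝ))))) l]
        rw [pow_succ x (p-1-i)]
        push_cast
        simp only [pow_zero, Nat.choose_zero_right, Nat.cast_one, one_mul, Nat.cast_zero, add_zero]
        rw [add_comm]
        congr 1
        exact sum_congr rfl (fun a ha => by rw [add_comm 1 a]; push_cast; ring_nf)


theorem stmt5 (j l p : ℕ) (hj : 1 ≤ j) (hl : 1 ≤ l) (hp : 1 ≤ p) (f : ℕ → ℝ)
    (h1 : ∀ s ≤ l, Summable (fun n : ℕ =>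
      f (n + 1) / (((n + 1 + j : ℕ) : ℝ) * ((n + 1 + s : ℕ) : ℝ))))
    (h2 : ∀ m, 1 ≤ m → m ≤ p - 1 →
      Summable (fun n : ℕ => f (n + 1) / ((n + 1 : ℕ) : ℝ) ^ (p + 1 - m)))
    (h3 : ∀ m, 1 ≤ m → m ≤ p - 1 → ∀ a, 1 ≤ a → a ≤ l →
      Summable (fun n : ℕ =>
        f (n + 1) / (((n + 1 : ℕ) : ℝ) ^ (p - m) * ((n + 1 + a : ℕ) : ℝ)))) :
    ∑' n : ℕ, f (n + 1) /
        (((n + 1 : ℕ) : ℝ) ^ p * ((n + 1 + j : ℕ) : ℝ) * (Nat.choose (n + 1 + l) l : ℝ)) =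
      (∑ m ∈ Finset.Icc 1 (p - 1), (-1 : ℝ) ^ (m - 1) / (j : ℝ) ^ m *
        ((∑' n : ℕ, f (n + 1) / ((n + 1 : ℕ) : ℝ) ^ (p + 1 - m)) +
         ∑ a ∈ Finset.Icc 1 l, (-1 : ℝ) ^ a * (Nat.choose l a : ℝ) *
           ∑' n : ℕ, f (n + 1) / (((n + 1 : ℕ) : ℝ) ^ (p - m) * ((n + 1 + a : ℕ) : ℝ)))) +
      (-1 : ℝ) ^ (p - 1) / (j : ℝ) ^ (p - 1) *
        ∑ s ∈ Finset.range (l + 1), (-1 : ℝ) ^ s * (Nat.choose l s : ℝ) *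
          ∑' n : ℕ, f (n + 1) / (((n + 1 + j : ℕ) : ℝ) * ((n + 1 + s : ℕ) : ℝ)) := by
  have hS2 : ∀ m ∈ Icc 1 (p-1), Summable (fun n : ℕ =>
      f (n + 1) / ((n + 1 : ℕ) : ℝ) ^ (p + 1 - m)) := by
    intro m hm; rw [mem_Icc] at hm; exact h2 m hm.1 hm.2
  have hS3 : ∀ m ∈ Icc 1 (p-1), ∀ a ∈ Icc 1 l, Summable (fun n : ℕ =>
      (-1:ℝ)^a * (l.choose a : ℝ) *
        (f (n + 1) / (((n + 1 : ℕ) : ℝ) ^ (p - m) * ((n + 1 + a : ℕ) : ℝ)))) := by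
    intro m hm a ha; rw [mem_Icc] at hm ha
    exact (h3 m hm.1 hm.2 a ha.1 ha.2).mul_left _
  have hSinner : ∀ m ∈ Icc 1 (p-1), Summable (fun n : ℕ =>
      f (n + 1) / ((n + 1 : ℕ) : ℝ) ^ (p + 1 - m)
        + ∑ a ∈ Icc 1 l, (-1:ℝ)^a * (l.choose a : ℝ) *
            (f (n + 1) / (((n + 1 : ℕ) : ℝ) ^ (p - m) * ((n + 1 + a : ℕ) : ℝ)))) :=
    fun m hm => (hS2 m hm).add (summable_sum (hS3 m hm))
  have hSm : ∀ m ∈ Icc 1 (p-1), Summable (fun n : ℕ =>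
      (-1:ℝ)^(m-1) / (j:ℝ)^m *
        (f (n + 1) / ((n + 1 : ℕ) : ℝ) ^ (p + 1 - m)
          + ∑ a ∈ Icc 1 l, (-1:ℝ)^a * (l.choose a : ℝ) *
              (f (n + 1) / (((n + 1 : ℕ) : ℝ) ^ (p - m) * ((n + 1 + a : ℕ) : ℝ))))) :=
    fun m hm => (hSinner m hm).mul_left _
  have hSs : ∀ s ∈ range (l+1), Summable (fun n : ℕ =>
      (-1:ℝ)^s * (l.choose s : ℝ) *
        (f (n + 1) / (((n + 1 + j : ℕ) : ℝ) * ((n + 1 + s : ℕ) : ℝ)))) := by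
    intro s hs; rw [mem_range] at hs
    exact (h1 s (by omega)).mul_left _
  have hSfirst : Summable (fun n : ℕ => ∑ m ∈ Icc 1 (p-1),
      (-1:ℝ)^(m-1) / (j:ℝ)^m *
        (f (n + 1) / ((n + 1 : ℕ) : ℝ) ^ (p + 1 - m)
          + ∑ a ∈ Icc 1 l, (-1:ℝ)^a * (l.choose a : ℝ) *
              (f (n + 1) / (((n + 1 : ℕ) : ℝ) ^ (p - m) * ((n + 1 + a : ℕ) : ℝ))))) :=
    summable_sum hSm
  have hSsecond : Summable (fun n : ℕ =>
      (-1:ℝ)^(p-1) / (j:ℝ)^(p-1) * ∑ s ∈ range (l+1),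
        (-1:ℝ)^s * (l.choose s : ℝ) *
          (f (n + 1) / (((n + 1 + j : ℕ) : ℝ) * ((n + 1 + s : ℕ) : ℝ)))) :=
    (summable_sum hSs).mul_left _
  calc ∑' n : ℕ, f (n + 1) /
        (((n + 1 : ℕ) : ℝ) ^ p * ((n + 1 + j : ℕ) : ℝ) * (Nat.choose (n + 1 + l) l : ℝ))
      = ∑' n : ℕ, (∑ m ∈ Icc 1 (p-1),
          (-1:ℝ)^(m-1) / (j:ℝ)^m *
            (f (n + 1) / ((n + 1 : ℕ) : ℝ) ^ (p + 1 - m)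
              + ∑ a ∈ Icc 1 l, (-1:ℝ)^a * (l.choose a : ℝ) *
                  (f (n + 1) / (((n + 1 : ℕ) : ℝ) ^ (p - m) * ((n + 1 + a : ℕ) : ℝ))))
          + (-1:ℝ)^(p-1) / (j:ℝ)^(p-1) * ∑ s ∈ range (l+1),
              (-1:ℝ)^s * (l.choose s : ℝ) *
                (f (n + 1) / (((n + 1 + j : ℕ) : ℝ) * ((n + 1 + s : ℕ) : ℝ)))) :=
        tsum_congr (fun n => pointwise j l p n hj hp (f (n+1)))
    _ = (∑' n : ℕ, ∑ m ∈ Icc 1 (p-1),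
          (-1:ℝ)^(m-1) / (j:ℝ)^m *
            (f (n + 1) / ((n + 1 : ℕ) : ℝ) ^ (p + 1 - m)
              + ∑ a ∈ Icc 1 l, (-1:ℝ)^a * (l.choose a : ℝ) *
                  (f (n + 1) / (((n + 1 : ℕ) : ℝ) ^ (p - m) * ((n + 1 + a : ℕ) : ℝ)))))
        + ∑' n : ℕ, (-1:ℝ)^(p-1) / (j:ℝ)^(p-1) * ∑ s ∈ range (l+1),
              (-1:ℝ)^s * (l.choose s : ℝ) *
                (f (n + 1) / (((n + 1 + j : ℕ) : ℝ) * ((n + 1 + s : ℕ) : ℝ))) :=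
        Summable.tsum_add hSfirst hSsecond
    _ = _ := by
        congr 1
        · rw [Summable.tsum_finsetSum hSm]
          refine sum_congr rfl (fun m hm => ?_)
          rw [tsum_mul_left]
          congr 1
          rw [Summable.tsum_add (hS2 m hm) (summable_sum (hS3 m hm)), Summable.tsum_finsetSum (hS3 m hm)]
          congr 1
          exact sum_congr rfl (fun a ha => tsum_mul_left)
        · rw [tsum_mul_left]
          congr 1
          rw [Summable.tsum_finsetSum hSs]
          exact sum_congr rfl (fun s hs => tsum_mul_left)
end

section
/- Let p and r be positive integers with p > 1. Then Σ_{k=1}^∞ ζ(p,k)/(r+k) = ζ_H(p) + Σ_{j=2}^{p-1} (-1)^{j-1} ζ(p+1-j) H_r^{(j)} + (-1)^{p-1} Σ_{j=1}^r H_j/j^p, where ζ(p,k) = Σ_{n=0}^∞ 1/(n+k)^p is the Hurwitz zeta value. -/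
open Finset
open Filter Topology

/-- Hurwitz zeta value `ζ(p,k) = ∑_{n=0}^∞ 1/(n+k)^p`. -/
noncomputable def hurwitzZetaVal (p k : ℕ) : ℝ := ∑' n : ℕ, 1 / ((n : ℝ) + (k : ℝ)) ^ p

namespace S10

lemma summable_sq : Summable (fun m : ℕ => 1 / ((m:ℝ)+1)^2) := by
  have h : Summable (fun n : ℕ => 1 / (n : ℝ) ^ 2) :=
    Real.summable_one_div_nat_pow.2 one_lt_two
  have := (summable_nat_add_iff 1).2 h
  refine this.congr fun n => ?_
  push_cast
  ring_nf

lemma summable_of_le_sq {f : ℕ → ℝ} (C : ℝ) (h0 : ∀ m, 0 ≤ f m)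
    (h : ∀ m, f m ≤ C / ((m:ℝ)+1)^2) : Summable f := by
  refine Summable.of_nonneg_of_le h0 h ?_
  simpa [div_eq_mul_inv, mul_comm, one_div] using summable_sq.mul_left C

lemma one_le_cast_add_one (m : ℕ) : (1:ℝ) ≤ (m:ℝ)+1 := by
  have : (0:ℝ) ≤ (m:ℝ) := Nat.cast_nonneg m
  linarith

/-- telescoping consecutive -/
lemma tele_hasSum (a : ℕ) (ha : 1 ≤ a) :
    HasSum (fun n : ℕ => 1 / (((n:ℝ)+a) * ((n:ℝ)+a+1))) (1/(a:ℝ)) := by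
  have ha' : (1:ℝ) ≤ (a:ℝ) := by exact_mod_cast ha
  have hpos : ∀ n : ℕ, (0:ℝ) < (n:ℝ)+a := fun n => by
    have : (0:ℝ) ≤ (n:ℝ) := Nat.cast_nonneg n
    linarith
  rw [hasSum_iff_tendsto_nat_of_nonneg]
  · have key : ∀ N : ℕ, ∑ n ∈ range N, 1 / (((n:ℝ)+a) * ((n:ℝ)+a+1))
        = 1/(a:ℝ) - 1/((N:ℝ)+a) := by
      intro N
      have h2 : ∀ n : ℕ, 1 / (((n:ℝ)+a) * ((n:ℝ)+a+1))
          = 1/((n:ℝ)+a) - 1/(((n+1:ℕ):ℝ)+a) := by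
        intro n
        have h1 := hpos n
        have h2 : (0:ℝ) < (n:ℝ)+a+1 := by linarith
        push_cast
        rw [show (n:ℝ) + 1 + (a:ℝ) = (n:ℝ) + a + 1 by ring,
          div_sub_div _ _ h1.ne' h2.ne']
        congr 1
        ring
      calc ∑ n ∈ range N, 1 / (((n:ℝ)+a) * ((n:ℝ)+a+1))
          = ∑ n ∈ range N, (1/((n:ℝ)+a) - 1/(((n+1:ℕ):ℝ)+a)) :=
            Finset.sum_congr rfl fun n _ => h2 n
        _ = 1/(((0:ℕ):ℝ)+a) - 1/((N:ℝ)+a) :=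
            Finset.sum_range_sub' (fun n : ℕ => 1/((n:ℝ)+a)) N
        _ = 1/(a:ℝ) - 1/((N:ℝ)+a) := by norm_num
    simp only [key]
    have : Tendsto (fun N : ℕ => 1/((N:ℝ)+a)) atTop (𝓝 0) := by
      simp only [one_div]
      exact tendsto_inv_atTop_zero.comp
        (tendsto_atTop_add_const_right _ _ tendsto_natCast_atTop_atTop)
    simpa using (tendsto_const_nhds (x := 1/(a:ℝ))).sub this
  · intro n
    have h1 := hpos n
    positivity

lemma tele_tsum (a : ℕ) (ha : 1 ≤ a) :
    ∑' n : ℕ, 1 / (((n:ℝ)+a) * ((n:ℝ)+a+1)) = 1/(a:ℝ) := (tele_hasSum a ha).tsum_eq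

end S10

namespace S10

lemma sum_Icc_one (f : ℕ → ℝ) (n : ℕ) :
    ∑ k ∈ Icc 1 n, f k = ∑ k ∈ range n, f (k+1) := by
  induction n with
  | zero => simp
  | succ n ih => rw [Finset.sum_Icc_succ_top (by omega), ih, Finset.sum_range_succ]

lemma Hgen1_eq (n : ℕ) : Hgen 1 n = ∑ m ∈ range n, 1/((m:ℝ)+1) := by
  rw [Hgen, sum_Icc_one]
  exact Finset.sum_congr rfl fun k _ => by push_cast; ring

lemma Hgen_add (a b : ℕ) : Hgen 1 (a+b) = Hgen 1 a + ∑ i ∈ Icc 1 b, 1/((a:ℝ)+i) := by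
  induction b with
  | zero => simp
  | succ b ih =>
    rw [show a+(b+1) = (a+b)+1 by omega, Hgen, Finset.sum_Icc_succ_top (by omega), ← Hgen,
      ih, Finset.sum_Icc_succ_top (by omega)]
    push_cast
    ring

lemma tendsto_shift (x : ℕ) :
    Tendsto (fun N : ℕ => 1/(((N+x:ℕ):ℝ)+1)) atTop (𝓝 0) := by
  have : Tendsto (fun N : ℕ => ((N:ℝ)+((x:ℝ)+1))⁻¹) atTop (𝓝 0) :=
    tendsto_inv_atTop_zero.comp
      (tendsto_atTop_add_const_right _ _ tendsto_natCast_atTop_atTop)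
  refine this.congr fun N => ?_
  push_cast
  rw [one_div]
  ring_nf

lemma gap_hasSum (i : ℕ) :
    HasSum (fun m : ℕ => 1/((m:ℝ)+1) - 1/((m:ℝ)+1+(i:ℝ))) (Hgen 1 i) := by
  rw [Hgen1_eq]
  set h : ℕ → ℝ := fun m => 1/((m:ℝ)+1) with hh
  rw [hasSum_iff_tendsto_nat_of_nonneg]
  · have key : ∀ N : ℕ, ∑ m ∈ range N, (1/((m:ℝ)+1) - 1/((m:ℝ)+1+(i:ℝ)))
        = ∑ m ∈ range i, h m - ∑ x ∈ range i, h (N+x) := by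
      intro N
      have e1 : ∀ m : ℕ, 1/((m:ℝ)+1+(i:ℝ)) = h (i+m) := by
        intro m; simp only [hh]; push_cast; ring_nf
      have e2 : ∑ m ∈ range N, (1/((m:ℝ)+1) - 1/((m:ℝ)+1+(i:ℝ)))
          = ∑ m ∈ range N, h m - ∑ m ∈ range N, h (i+m) := by
        rw [← Finset.sum_sub_distrib]
        exact Finset.sum_congr rfl fun m _ => by rw [e1]
      have e3 := Finset.sum_range_add h i N
      have e4 := Finset.sum_range_add h N i
      rw [e2]
      have : (i + N) = (N + i) := by omega
      rw [this] at e3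
      linarith [e3, e4]
    simp only [key]
    have h2 : Tendsto (fun N : ℕ => ∑ x ∈ range i, h (N+x)) atTop (𝓝 0) := by
      have h5 : Tendsto (fun N : ℕ => ∑ x ∈ range i, 1/(((N+x:ℕ):ℝ)+1)) atTop (𝓝 0) := by
        have := tendsto_finset_sum (range i) (fun x (_ : x ∈ range i) => tendsto_shift x)
        simpa using this
      exact h5
    have h3 : Tendsto (fun N : ℕ => ∑ m ∈ range i, h m - ∑ x ∈ range i, h (N+x))
        atTop (𝓝 (∑ m ∈ range i, h m - 0)) := Tendsto.sub tendsto_const_nhds h2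
    rw [sub_zero] at h3
    exact h3
  · intro m
    have h0 : (0:ℝ) ≤ (i:ℝ) := Nat.cast_nonneg i
    have : (0:ℝ) < (m:ℝ)+1 := by positivity
    have h3 : 1/((m:ℝ)+1+(i:ℝ)) ≤ 1/((m:ℝ)+1) :=
      one_div_le_one_div_of_le this (by linarith)
    linarith

lemma frac_hasSum (i : ℕ) (hi : 1 ≤ i) :
    HasSum (fun m : ℕ => 1/(((m:ℝ)+1) * ((m:ℝ)+1+(i:ℝ)))) (Hgen 1 i/(i:ℝ)) := by
  have hi' : (0:ℝ) < (i:ℝ) := by exact_mod_cast hi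
  have h2 : (fun m : ℕ => 1/(((m:ℝ)+1) * ((m:ℝ)+1+(i:ℝ))))
      = fun m : ℕ => (1/(i:ℝ)) * (1/((m:ℝ)+1) - 1/((m:ℝ)+1+(i:ℝ))) := by
    funext m
    have : (0:ℝ) < (m:ℝ)+1 := by positivity
    have h4 : (0:ℝ) < (m:ℝ)+1+(i:ℝ) := by linarith
    field_simp
    ring
  rw [h2, show Hgen 1 i/(i:ℝ) = (1/(i:ℝ)) * Hgen 1 i by ring]
  exact (gap_hasSum i).mul_left _

end S10

namespace S10

lemma summable_pow {q : ℕ} (hq : 2 ≤ q) : Summable (fun m : ℕ => 1/((m:ℝ)+1)^q) := by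
  apply summable_of_le_sq 1 (fun m => by positivity)
  intro m
  apply one_div_le_one_div_of_le (by positivity)
  exact pow_le_pow_right₀ (one_le_cast_add_one m) hq

lemma summable_pow_frac (q i : ℕ) (hq : 1 ≤ q) :
    Summable (fun m : ℕ => 1/(((m:ℝ)+1)^q * ((m:ℝ)+1+(i:ℝ)))) := by
  apply summable_of_le_sq 1 (fun m => by positivity)
  intro m
  apply one_div_le_one_div_of_le (by positivity)
  have h1 : (1:ℝ) ≤ (m:ℝ)+1 := one_le_cast_add_one m
  have h2 : ((m:ℝ)+1) ≤ ((m:ℝ)+1)^q := le_self_pow₀ h1 (by omega)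
  have h3 : ((m:ℝ)+1) ≤ ((m:ℝ)+1+(i:ℝ)) := by
    have : (0:ℝ) ≤ (i:ℝ) := Nat.cast_nonneg i
    linarith
  calc ((m:ℝ)+1)^2 = ((m:ℝ)+1) * ((m:ℝ)+1) := sq _
    _ ≤ ((m:ℝ)+1)^q * ((m:ℝ)+1+(i:ℝ)) := by
        apply mul_le_mul h2 h3 (by positivity) (by positivity)

lemma sQ_closed (i : ℕ) (hi : 1 ≤ i) (q : ℕ) :
    ∑' m : ℕ, 1/(((m:ℝ)+1)^(q+1) * ((m:ℝ)+1+(i:ℝ)))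
      = ∑ j ∈ range q, (-1:ℝ)^j * zetaVal (q+1-j) / (i:ℝ)^(j+1)
        + (-1:ℝ)^q * Hgen 1 i / (i:ℝ)^(q+1) := by
  have hi' : (0:ℝ) < (i:ℝ) := by exact_mod_cast hi
  induction q with
  | zero =>
    rw [show (fun m : ℕ => 1/(((m:ℝ)+1)^(0+1) * ((m:ℝ)+1+(i:ℝ))))
        = fun m : ℕ => 1/(((m:ℝ)+1) * ((m:ℝ)+1+(i:ℝ))) from funext fun m => by norm_num,
      (frac_hasSum i hi).tsum_eq]
    simp
  | succ q ih =>
    have key : (fun m : ℕ => 1/(((m:ℝ)+1)^(q+1+1) * ((m:ℝ)+1+(i:ℝ))))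
        = fun m : ℕ => (1/(i:ℝ)) * (1/((m:ℝ)+1)^(q+2)
            - 1/(((m:ℝ)+1)^(q+1) * ((m:ℝ)+1+(i:ℝ)))) := by
      funext m
      have h1 : (0:ℝ) < (m:ℝ)+1 := by positivity
      have h2 : (0:ℝ) < (m:ℝ)+1+(i:ℝ) := by linarith
      field_simp
      ring
    rw [key, tsum_mul_left,
      Summable.tsum_sub (summable_pow (by omega)) (summable_pow_frac (q+1) i (by omega)),
      show (∑' m : ℕ, 1/((m:ℝ)+1)^(q+2)) = zetaVal (q+2) from rfl, ih,
      Finset.sum_range_succ' (fun j => (-1:ℝ)^j * zetaVal (q+1+1-j) / (i:ℝ)^(j+1)) q]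
    have e1 : ∀ j ∈ range q, (-1:ℝ)^(j+1) * zetaVal (q+1+1-(j+1)) / (i:ℝ)^(j+1+1)
        = (-(1/(i:ℝ))) * ((-1:ℝ)^j * zetaVal (q+1-j) / (i:ℝ)^(j+1)) := by
      intro j _
      rw [show q+1+1-(j+1) = q+1-j by omega]
      field_simp
      ring
    rw [Finset.sum_congr rfl e1, ← Finset.mul_sum]
    simp only [pow_zero, one_mul, Nat.sub_zero]
    field_simp
    ring

end S10

namespace S10

lemma hur_eq (p k : ℕ) : hurwitzZetaVal p (k+1) = ∑' n : ℕ, 1/((n:ℝ)+(k:ℝ)+1)^p := by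
  rw [hurwitzZetaVal]
  congr 1
  funext n
  push_cast
  ring_nf

lemma summable_hur (p k : ℕ) (hp : 2 ≤ p) :
    Summable (fun n : ℕ => 1/((n:ℝ)+(k:ℝ)+1)^p) := by
  apply summable_of_le_sq 1 (fun m => by positivity)
  intro n
  apply one_div_le_one_div_of_le (by positivity)
  have hk : (0:ℝ) ≤ (k:ℝ) := Nat.cast_nonneg k
  have hn : (0:ℝ) ≤ (n:ℝ) := Nat.cast_nonneg n
  calc ((n:ℝ)+1)^2 ≤ ((n:ℝ)+(k:ℝ)+1)^2 := by nlinarith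
    _ ≤ ((n:ℝ)+(k:ℝ)+1)^p := pow_le_pow_right₀ (by linarith) hp

lemma hur_nonneg (p k : ℕ) : 0 ≤ hurwitzZetaVal p (k+1) :=
  tsum_nonneg fun n => by positivity

lemma hur_le (p k : ℕ) (hp : 2 ≤ p) : hurwitzZetaVal p (k+1) ≤ 2/((k:ℝ)+1) := by
  have ht := tele_hasSum (k+1) (by omega)
  have hcast : ((k+1:ℕ):ℝ) = (k:ℝ)+1 := by push_cast; ring
  rw [hcast] at ht
  have ht2 := ht.mul_left 2
  rw [hur_eq]
  have hle : ∀ n : ℕ, 1/((n:ℝ)+(k:ℝ)+1)^p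
      ≤ 2 * (1/(((n:ℝ)+((k:ℝ)+1)) * ((n:ℝ)+((k:ℝ)+1)+1))) := by
    intro n
    have hn : (0:ℝ) ≤ (n:ℝ) := Nat.cast_nonneg n
    have hk : (0:ℝ) ≤ (k:ℝ) := Nat.cast_nonneg k
    set x : ℝ := (n:ℝ)+(k:ℝ)+1 with hx
    have hx1 : (1:ℝ) ≤ x := by simp [hx]; linarith
    have hxp : x^2 ≤ x^p := pow_le_pow_right₀ hx1 hp
    have e : (n:ℝ)+((k:ℝ)+1) = x := by simp [hx]; ring
    rw [e]
    have h2 : 2 * (1 / (x * (x+1))) = 2/(x*(x+1)) := by ring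
    rw [h2, div_le_div_iff₀ (by positivity) (by positivity)]
    nlinarith [hxp, hx1]
  calc ∑' n : ℕ, 1/((n:ℝ)+(k:ℝ)+1)^p
      ≤ ∑' n : ℕ, 2 * (1/(((n:ℝ)+((k:ℝ)+1)) * ((n:ℝ)+((k:ℝ)+1)+1))) :=
        Summable.tsum_le_tsum hle (summable_hur p k hp) ht2.summable
    _ = 2 * (1/((k:ℝ)+1)) := ht2.tsum_eq
    _ = 2/((k:ℝ)+1) := by ring

end S10

namespace S10

lemma sum_Icc_two (f : ℕ → ℝ) (n : ℕ) :
    ∑ k ∈ Icc 2 (n+1), f k = ∑ k ∈ range n, f (k+2) := by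
  induction n with
  | zero => simp
  | succ n ih => rw [Finset.sum_Icc_succ_top (by omega), ih, Finset.sum_range_succ]

end S10


open S10 in
theorem stmt10 (p r : ℕ) (hp : 1 < p) (hr : 1 ≤ r) :
    ∑' k : ℕ, hurwitzZetaVal p (k + 1) / ((r : ℝ) + ((k : ℝ) + 1)) =
      eulerSum 1 p +
      (∑ j ∈ Finset.Icc 2 (p - 1), (-1 : ℝ) ^ (j - 1) * zetaVal (p + 1 - j) * Hgen j r) +
      (-1 : ℝ) ^ (p - 1) * ∑ j ∈ Finset.Icc 1 r, Hgen 1 j / (j : ℝ) ^ p := by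
  obtain ⟨q, rfl⟩ : ∃ q, p = q + 2 := ⟨p - 2, by omega⟩
  set p := q + 2 with hpdef
  have hp2 : 2 ≤ p := by omega
  have hr' : (1:ℝ) ≤ (r:ℝ) := by exact_mod_cast hr
  -- the double array
  set f : ℕ → ℕ → ℝ := fun k m =>
    if k ≤ m then 1/(((m:ℝ)+1)^p * ((r:ℝ)+(k:ℝ)+1)) else 0 with hf
  have hnn : ∀ k m, 0 ≤ f k m := by
    intro k m
    simp only [hf]
    split
    · positivity
    · exact le_refl 0
  -- summability in m for fixed k
  have h1 : ∀ k, Summable (f k) := by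
    intro k
    apply summable_of_le_sq 1 (hnn k)
    intro m
    simp only [hf]
    split
    · apply one_div_le_one_div_of_le (by positivity)
      have hm1 : (1:ℝ) ≤ (m:ℝ)+1 := one_le_cast_add_one m
      have hk : (0:ℝ) ≤ (k:ℝ) := Nat.cast_nonneg k
      have e2 : ((m:ℝ)+1)^2 ≤ ((m:ℝ)+1)^p := pow_le_pow_right₀ hm1 hp2
      have e3 : (1:ℝ) ≤ (r:ℝ)+(k:ℝ)+1 := by linarith
      calc ((m:ℝ)+1)^2 = ((m:ℝ)+1)^2 * 1 := by ring
        _ ≤ ((m:ℝ)+1)^p * ((r:ℝ)+(k:ℝ)+1) := by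
            apply mul_le_mul e2 e3 (by norm_num) (by positivity)
    · positivity
  -- value of row sums
  have hfk : ∀ k, ∑' m, f k m = hurwitzZetaVal p (k+1) / ((r:ℝ)+(k:ℝ)+1) := by
    intro k
    rw [← Summable.sum_add_tsum_nat_add k (h1 k)]
    have hz : ∑ i ∈ range k, f k i = 0 := by
      apply Finset.sum_eq_zero
      intro i hi
      simp only [hf]
      rw [if_neg (by simp at hi; omega)]
    rw [hz, zero_add]
    have he : ∀ n : ℕ, f k (n + k) = (1/((r:ℝ)+(k:ℝ)+1)) * (1/((n:ℝ)+(k:ℝ)+1)^p) := by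
      intro n
      simp only [hf]
      rw [if_pos (by omega)]
      push_cast
      rw [one_div_mul_one_div]
      ring_nf
    rw [tsum_congr he, tsum_mul_left, ← hur_eq p k]
    ring
  -- summability of row sums
  have h2 : Summable (fun k => ∑' m, f k m) := by
    apply summable_of_le_sq 2
    · intro k
      rw [hfk k]
      have := hur_nonneg p k
      positivity
    · intro k
      rw [hfk k]
      have hk : (0:ℝ) ≤ (k:ℝ) := Nat.cast_nonneg k
      have hb := hur_le p k hp2
      calc hurwitzZetaVal p (k+1) / ((r:ℝ)+(k:ℝ)+1)
          ≤ (2/((k:ℝ)+1)) / ((k:ℝ)+1) := by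
            apply div_le_div₀ (by positivity) hb (by positivity) (by linarith)
        _ = 2/((k:ℝ)+1)^2 := by
            rw [div_div, sq]
  -- product summability
  have hsumF : Summable (Function.uncurry f) := by
    exact (summable_prod_of_nonneg (fun x => hnn x.1 x.2)).2 ⟨fun k => h1 k, h2⟩
  -- summability in k for fixed m
  have h3 : ∀ m, Summable (fun k => f k m) := by
    intro m
    apply summable_of_ne_finset_zero (s := range (m+1))
    intro k hk
    simp only [hf]
    rw [if_neg (by simp at hk; omega)]
  -- swap
  have hswap : ∑' k : ℕ, hurwitzZetaVal p (k + 1) / ((r : ℝ) + ((k : ℝ) + 1))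
      = ∑' m, ∑' k, f k m := by
    rw [tsum_congr (fun k => ?_), ← Summable.tsum_comm' hsumF h1 h3]
    rw [hfk k]
    ring_nf
  rw [hswap]
  -- column sums
  have hWm : ∀ m, ∑' k, f k m
      = Hgen 1 (m+1)/((m:ℝ)+1)^p
        + ∑ i ∈ Icc 1 r, (-(1/(i:ℝ))) * (1/(((m:ℝ)+1)^(q+1) * ((m:ℝ)+1+(i:ℝ)))) := by
    intro m
    have e0 : ∑' k, f k m = ∑ k ∈ range (m+1), 1/(((m:ℝ)+1)^p * ((r:ℝ)+(k:ℝ)+1)) := by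
      rw [tsum_eq_sum (s := range (m+1)) (f := fun k => f k m) (fun k hk => ?_)]
      · exact Finset.sum_congr rfl fun k hk => by
          simp only [hf]
          rw [if_pos (by simp at hk; omega)]
      · simp only [hf]
        rw [if_neg (by simp at hk; omega)]
    have e1 : ∑ k ∈ range (m+1), 1/(((m:ℝ)+1)^p * ((r:ℝ)+(k:ℝ)+1))
        = (1/((m:ℝ)+1)^p) * ∑ k ∈ range (m+1), 1/((r:ℝ)+(k:ℝ)+1) := by
      rw [Finset.mul_sum]
      exact Finset.sum_congr rfl fun k _ => (one_div_mul_one_div _ _).symm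
    have e2 : ∑ k ∈ range (m+1), 1/((r:ℝ)+(k:ℝ)+1)
        = Hgen 1 (m+1) + ∑ i ∈ Icc 1 r, (1/((m:ℝ)+1+(i:ℝ)) - 1/(i:ℝ)) := by
      have a1 : ∑ k ∈ range (m+1), 1/((r:ℝ)+(k:ℝ)+1)
          = ∑ k ∈ Icc 1 (m+1), 1/((r:ℝ)+(k:ℝ)) := by
        rw [sum_Icc_one (fun k => 1/((r:ℝ)+(k:ℝ))) (m+1)]
        exact Finset.sum_congr rfl fun k _ => by push_cast; ring_nf
      have a2 := Hgen_add r (m+1)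
      have a3 := Hgen_add (m+1) r
      have a4 : Hgen 1 r = ∑ i ∈ Icc 1 r, 1/(i:ℝ) := by
        rw [Hgen]
        exact Finset.sum_congr rfl fun k _ => by rw [pow_one]
      rw [show r + (m+1) = (m+1) + r by omega] at a2
      have a6 : ∑ i ∈ Icc 1 r, 1/(((m+1:ℕ):ℝ)+(i:ℝ)) = ∑ i ∈ Icc 1 r, 1/((m:ℝ)+1+(i:ℝ)) :=
        Finset.sum_congr rfl fun i _ => by push_cast; ring_nf
      rw [a3, a6] at a2
      rw [a1, Finset.sum_sub_distrib, ← a4]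
      linarith [a2]
    have e3 : ∀ i ∈ Icc 1 r, (1/((m:ℝ)+1)^p) * (1/((m:ℝ)+1+(i:ℝ)) - 1/(i:ℝ))
        = (-(1/(i:ℝ))) * (1/(((m:ℝ)+1)^(q+1) * ((m:ℝ)+1+(i:ℝ)))) := by
      intro i hi
      have hi1 : 1 ≤ i := (Finset.mem_Icc.1 hi).1
      have hi' : (0:ℝ) < (i:ℝ) := by exact_mod_cast hi1
      have hm : (0:ℝ) < (m:ℝ)+1 := by positivity
      have hmi : (0:ℝ) < (m:ℝ)+1+(i:ℝ) := by linarith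
      rw [hpdef]
      field_simp
      ring
    rw [e0, e1, e2, mul_add, Finset.mul_sum, Finset.sum_congr rfl e3]
    congr 1
    ring
  -- summability of column sums
  have hWsum : Summable (fun m => ∑' k, f k m) := by
    have hsw := (Equiv.prodComm ℕ ℕ).summable_iff.2 hsumF
    exact ((summable_prod_of_nonneg (fun x => hnn x.2 x.1)).1 hsw).2
  have hCsum : Summable (fun m : ℕ =>
      ∑ i ∈ Icc 1 r, (-(1/(i:ℝ))) * (1/(((m:ℝ)+1)^(q+1) * ((m:ℝ)+1+(i:ℝ))))) := by
    apply summable_sum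
    intro i hi
    exact (summable_pow_frac (q+1) i (by omega)).mul_left _
  have hEsum : Summable (fun m : ℕ => Hgen 1 (m+1)/((m:ℝ)+1)^p) := by
    refine (hWsum.sub hCsum).congr fun m => ?_
    rw [hWm m]
    ring
  rw [tsum_congr hWm, Summable.tsum_add hEsum hCsum,
    Summable.tsum_finsetSum (fun i _ => (summable_pow_frac (q+1) i (by omega)).mul_left _)]
  have heuler : ∑' m : ℕ, Hgen 1 (m+1)/((m:ℝ)+1)^p = eulerSum 1 p := rfl
  have hfinal : ∀ i ∈ Icc 1 r,
      (∑' m : ℕ, (-(1/(i:ℝ))) * (1/(((m:ℝ)+1)^(q+1) * ((m:ℝ)+1+(i:ℝ)))))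
      = ∑ j ∈ range q, (-1:ℝ)^(j+1) * zetaVal (q+1-j) * (1/(i:ℝ)^(j+2))
        + (-1:ℝ)^(q+1) * (Hgen 1 i / (i:ℝ)^(q+2)) := by
    intro i hi
    have hi1 : 1 ≤ i := (Finset.mem_Icc.1 hi).1
    have hi' : (0:ℝ) < (i:ℝ) := by exact_mod_cast hi1
    rw [tsum_mul_left, sQ_closed i hi1 q, mul_add, Finset.mul_sum]
    congr 1
    · refine Finset.sum_congr rfl fun j _ => ?_
      field_simp
      ring
    · field_simp
      ring
  rw [heuler, Finset.sum_congr rfl hfinal, Finset.sum_add_distrib]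
  have hmid : ∑ i ∈ Icc 1 r, ∑ j ∈ range q, (-1:ℝ)^(j+1) * zetaVal (q+1-j) * (1/(i:ℝ)^(j+2))
      = ∑ j ∈ Icc 2 (p-1), (-1:ℝ)^(j-1) * zetaVal (p+1-j) * Hgen j r := by
    rw [Finset.sum_comm, show p - 1 = q + 1 by omega,
      sum_Icc_two (fun j => (-1:ℝ)^(j-1) * zetaVal (p+1-j) * Hgen j r) q]
    refine Finset.sum_congr rfl fun j _ => ?_
    rw [show j+2-1 = j+1 by omega, show p+1-(j+2) = q+1-j by omega, Hgen, Finset.mul_sum]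
  have hlast : ∑ i ∈ Icc 1 r, (-1:ℝ)^(q+1) * (Hgen 1 i / (i:ℝ)^(q+2))
      = (-1:ℝ)^(p-1) * ∑ j ∈ Icc 1 r, Hgen 1 j / (j:ℝ)^p := by
    rw [show p - 1 = q + 1 by omega, ← Finset.mul_sum]
  rw [hmid, hlast]
  ring
end

section
/- Let p, q be positive integers and l a non-negative integer with p > q + 1, and let c_0, c_1, ..., c_q be the integers determined by the polynomial identity (x+l+1)(x+l+2)···(x+l+q) = Σ_{k=0}^q c_k x^k (i.e., c_k is the (l+1)-Stirling number of the first kind, the coefficient of x^k in the ascending factorial starting at l+1). Then Σ_{n=q+l+1}^∞ C(n,q) H_n/(n-l-q)^p = C(q+l, l) Σ_{n=1}^∞ h_n^{(q+l+1)}/(n^p C(n+l, l)) + (H_{q+l}/q!) Σ_{k=0}^q c_k ζ(p-k). -/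
open Finset

lemma H_def (n : ℕ) : Hgen 1 n = ∑ k ∈ Finset.Icc 1 n, (1:ℝ)/(k:ℝ) := by
  simp [Hgen]

lemma H_zero : Hgen 1 0 = 0 := by simp [Hgen]

lemma H_succ (n : ℕ) : Hgen 1 (n+1) = Hgen 1 n + 1/((n:ℝ)+1) := by
  rw [H_def, H_def, Finset.sum_Icc_succ_top (by omega : 1 ≤ n+1)]
  push_cast; ring

lemma H_nonneg (n : ℕ) : 0 ≤ Hgen 1 n := by
  rw [H_def]; apply Finset.sum_nonneg; intro k _; positivity

lemma H_mono {a b : ℕ} (h : a ≤ b) : Hgen 1 a ≤ Hgen 1 b := by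
  rw [H_def, H_def]
  apply Finset.sum_le_sum_of_subset_of_nonneg (Finset.Icc_subset_Icc_right h)
  intro k _ _; positivity

lemma H_le_sqrt (n : ℕ) : Hgen 1 n ≤ 2 * Real.sqrt n := by
  induction n with
  | zero => simp [H_zero]
  | succ n ih =>
    rw [H_succ]
    have ha : Real.sqrt n ^ 2 = (n:ℝ) := Real.sq_sqrt (Nat.cast_nonneg n)
    have hb : Real.sqrt ((n:ℝ)+1) ^ 2 = (n:ℝ)+1 := Real.sq_sqrt (by positivity)
    have h1 : (1:ℝ) ≤ Real.sqrt ((n:ℝ)+1) := by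
      have := Real.sqrt_le_sqrt (show (1:ℝ) ≤ (n:ℝ)+1 by linarith [Nat.cast_nonneg (α := ℝ) n])
      rwa [Real.sqrt_one] at this
    have h0 : (0:ℝ) ≤ Real.sqrt n := Real.sqrt_nonneg n
    have hab : Real.sqrt n ≤ Real.sqrt ((n:ℝ)+1) := Real.sqrt_le_sqrt (by linarith)
    have hn1 : (0:ℝ) < (n:ℝ)+1 := by positivity
    have key : 1/((n:ℝ)+1) ≤ 2 * (Real.sqrt ((n:ℝ)+1) - Real.sqrt n) := by
      rw [div_le_iff₀ hn1]
      nlinarith [mul_nonneg (sub_nonneg.2 hab) (sub_nonneg.2 h1)]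
    have : ((n+1:ℕ):ℝ) = (n:ℝ)+1 := by push_cast; ring
    rw [this]
    linarith

lemma sum_choose_H (r n : ℕ) :
    ∑ k ∈ Finset.Icc 1 n, (((k+r).choose r : ℕ):ℝ) * (Hgen 1 (k+r) - Hgen 1 r)
      = (((n+r+1).choose (r+1) : ℕ):ℝ) * (Hgen 1 (n+r+1) - Hgen 1 (r+1)) := by
  induction n with
  | zero => simp
  | succ n ih =>
    rw [Finset.sum_Icc_succ_top (by omega : 1 ≤ n+1), ih]
    have e1 : n+1+r = n+r+1 := by omega
    rw [e1]
    have hpascal : ((((n+r+1)+1).choose (r+1) : ℕ):ℝ)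
        = (((n+r+1).choose r : ℕ):ℝ) + (((n+r+1).choose (r+1) : ℕ):ℝ) := by
      rw [Nat.choose_succ_succ]; push_cast; ring
    have hkey : ((n:ℝ)+(r:ℝ)+1+1) * (((n+r+1).choose r : ℕ):ℝ)
        = ((r:ℝ)+1) * ((((n+r+1)+1).choose (r+1) : ℕ):ℝ) := by
      have h2 : ((n+r+1+1) * (n+r+1).choose r : ℕ) = ((n+r+1+1).choose (r+1) * (r+1) : ℕ) := by
        simpa [Nat.succ_eq_add_one] using Nat.add_one_mul_choose_eq (n+r+1) r
      have h3 := congrArg (Nat.cast : ℕ → ℝ) h2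
      push_cast at h3
      push_cast
      linarith [h3]
    have key2 : ((((n+r+1).choose r : ℕ):ℝ) + (((n+r+1).choose (r+1) : ℕ):ℝ)) / ((n:ℝ)+(r:ℝ)+1+1)
        = (((n+r+1).choose r : ℕ):ℝ) / ((r:ℝ)+1) := by
      rw [div_eq_div_iff (by positivity) (by positivity)]
      rw [hpascal] at hkey; linarith
    rw [show n+r+1+1 = (n+r+1)+1 from rfl, hpascal, H_succ (n+r+1), H_succ r]
    push_cast
    linear_combination -key2

lemma hpos_closed (r n : ℕ) :
    hpos (r+1) n = (((n+r).choose r : ℕ):ℝ) * (Hgen 1 (n+r) - Hgen 1 r) := by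
  induction r generalizing n with
  | zero => simp [hpos, H_def, H_zero]
  | succ r ih =>
    show (∑ k ∈ Finset.Icc 1 n, hpos (r+1) k) = _
    rw [Finset.sum_congr rfl (fun k _ => ih k)]
    exact sum_choose_H r n

lemma prod_asc_s12 (m q : ℕ) :
    ∏ i ∈ Finset.Icc 1 q, ((m:ℝ) + (i:ℕ)) = (((m+q).choose q : ℕ):ℝ) * (Nat.factorial q : ℝ) := by
  induction q with
  | zero => simp
  | succ q ih =>
    rw [Finset.prod_Icc_succ_top (by omega : 1 ≤ q+1), ih]
    have h2 : ((m+q+1) * (m+q).choose q : ℕ) = ((m+q+1).choose (q+1) * (q+1) : ℕ) := by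
      simpa [Nat.succ_eq_add_one] using Nat.add_one_mul_choose_eq (m+q) q
    have h3 := congrArg (Nat.cast : ℕ → ℝ) h2
    push_cast at h3
    rw [show m+(q+1) = m+q+1 from by omega]
    push_cast [Nat.factorial_succ]
    linear_combination (Nat.factorial q : ℝ) * h3

lemma choose_ratio (q l N : ℕ) :
    ((q+l).choose l : ℕ) * ((N+q+l).choose (q+l) : ℕ)
      = ((N+l).choose l : ℕ) * ((N+q+l).choose q : ℕ) := by
  have h := Nat.choose_mul (n := N+q+l) (k := q+l) (show q ≤ q+l by omega)
  rw [show N+q+l-q = N+l from by omega, show q+l-q = l from by omega] at h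
  have hsymm : (q+l).choose q = (q+l).choose l := by
    have := Nat.choose_symm (show l ≤ q+l by omega)
    rwa [show q+l-l = q from by omega] at this
  rw [← hsymm, mul_comm, h, mul_comm]

lemma sqrt_bound_summable : Summable (fun n : ℕ => Real.sqrt ((n:ℝ)+1) / ((n:ℝ)+1)^2) := by
  have h1 : Summable (fun n : ℕ => (((n:ℝ)) ^ ((3:ℝ)/2))⁻¹) :=
    Real.summable_nat_rpow_inv.mpr (by norm_num)
  have h2 := (_root_.summable_nat_add_iff 1).mpr h1
  apply h2.congr
  intro n
  have hx : (0:ℝ) < (n:ℝ)+1 := by positivity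
  have hcast : (((n+1:ℕ)):ℝ) = (n:ℝ)+1 := by push_cast; ring
  rw [hcast]
  have hs : Real.sqrt ((n:ℝ)+1) > 0 := Real.sqrt_pos.mpr hx
  have hsq : Real.sqrt ((n:ℝ)+1) * Real.sqrt ((n:ℝ)+1) = (n:ℝ)+1 :=
    Real.mul_self_sqrt (le_of_lt hx)
  have h32 : ((n:ℝ)+1) ^ ((3:ℝ)/2) = ((n:ℝ)+1) * Real.sqrt ((n:ℝ)+1) := by
    rw [show (3:ℝ)/2 = 1 + 1/2 by norm_num, Real.rpow_add hx, Real.rpow_one,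
      ← Real.sqrt_eq_rpow]
  rw [h32]
  field_simp
  nlinarith [hsq]

set_option maxHeartbeats 1000000 in
theorem stmt12 (p q : ℕ) (hq : 1 ≤ q) (l : ℕ) (hpq : p > q + 1) (c : ℕ → ℤ)
    (hc : ∀ x : ℝ, (∏ i ∈ Finset.Icc 1 q, (x + (l : ℝ) + (i : ℝ))) =
      ∑ k ∈ Finset.range (q + 1), (c k : ℝ) * x ^ k) :
    ∑' n : ℕ, (Nat.choose (n + 1 + q + l) q : ℝ) * Hgen 1 (n + 1 + q + l) /
        ((n + 1 : ℕ) : ℝ) ^ p =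
      (Nat.choose (q + l) l : ℝ) *
        (∑' n : ℕ, hpos (q + l + 1) (n + 1) /
          (((n + 1 : ℕ) : ℝ) ^ p * (Nat.choose (n + 1 + l) l : ℝ))) +
      Hgen 1 (q + l) / (Nat.factorial q : ℝ) *
        ∑ k ∈ Finset.range (q + 1), (c k : ℝ) * zetaVal (p - k) := by
  have hcast : ∀ n : ℕ, ((n+1:ℕ):ℝ) = (n:ℝ)+1 := fun n => by push_cast; ring
  have hfq : (Nat.factorial q : ℝ) ≠ 0 := Nat.cast_ne_zero.mpr (Nat.factorial_ne_zero q)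
  set A : ℕ → ℝ := fun n => ((q+l).choose l : ℝ) *
      (hpos (q+l+1) (n+1) / (((n+1:ℕ):ℝ)^p * ((n+1+l).choose l : ℝ))) with hA
  set G : ℕ → ℝ := fun n => Hgen 1 (q+l) / (Nat.factorial q : ℝ) *
      ∑ k ∈ Finset.range (q+1), (c k : ℝ) * (1/((n:ℝ)+1)^(p-k)) with hG
  set CF : ℕ → ℝ := fun n =>
      ((n+1+q+l).choose q : ℝ) * (Hgen 1 (n+1+q+l) - Hgen 1 (q+l)) / ((n:ℝ)+1)^p with hCF
  have hNpos : ∀ n : ℕ, (0:ℝ) < (n:ℝ)+1 := fun n => by positivity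
  -- A equals closed form
  have hAeq : ∀ n : ℕ, A n = CF n := by
    intro n
    have hcl := hpos_closed (q+l) (n+1)
    rw [show n+1+(q+l) = n+1+q+l from by omega] at hcl
    have hbR := congrArg (Nat.cast : ℕ → ℝ) (choose_ratio q l (n+1))
    push_cast at hbR
    have hC1 : (((n+1+l).choose l : ℕ):ℝ) ≠ 0 :=
      ne_of_gt (by exact_mod_cast Nat.choose_pos (show l ≤ n+1+l by omega))
    simp only [hA, hCF, hcl, hcast]
    rw [← mul_div_assoc,
      div_eq_div_iff (mul_ne_zero (by positivity) hC1) (by positivity)]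
    linear_combination ((Hgen 1 (n+1+q+l) - Hgen 1 (q+l)) * ((n:ℝ)+1)^p) * hbR
  -- G equals closed form
  have hGeq : ∀ n : ℕ, G n = Hgen 1 (q+l) * ((n+1+q+l).choose q : ℝ) / ((n:ℝ)+1)^p := by
    intro n
    have hprod := prod_asc_s12 (n+1+l) q
    rw [show n+1+l+q = n+1+q+l from by omega] at hprod
    have hpe : (∏ i ∈ Finset.Icc 1 q, (((n+1+l:ℕ):ℝ) + (i:ℝ)))
        = ∏ i ∈ Finset.Icc 1 q, (((n:ℝ)+1) + (l:ℝ) + (i:ℝ)) :=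
      Finset.prod_congr rfl (fun i _ => by push_cast; ring)
    have hsum : ∑ k ∈ Finset.range (q+1), (c k : ℝ) * ((n:ℝ)+1)^k
        = ((n+1+q+l).choose q : ℝ) * (Nat.factorial q : ℝ) := by
      rw [← hc ((n:ℝ)+1), ← hpe, hprod]
    have hterm : ∀ k ∈ Finset.range (q+1),
        (c k : ℝ) * (1/((n:ℝ)+1)^(p-k)) = (c k : ℝ) * ((n:ℝ)+1)^k / ((n:ℝ)+1)^p := by
      intro k hk
      have hkq : k ≤ q := Nat.lt_succ_iff.mp (Finset.mem_range.mp hk)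
      have hxp : ((n:ℝ)+1)^(p-k) * ((n:ℝ)+1)^k = ((n:ℝ)+1)^p := by
        rw [← pow_add, Nat.sub_add_cancel (by omega)]
      rw [← hxp]
      field_simp
    simp only [hG]
    rw [Finset.sum_congr rfl hterm, ← Finset.sum_div, hsum]
    field_simp
  -- pointwise identity
  have hpoint : ∀ n : ℕ, ((n+1+q+l).choose q : ℝ) * Hgen 1 (n+1+q+l) / ((n+1:ℕ):ℝ)^p
      = A n + G n := by
    intro n
    rw [hAeq n, hGeq n, hcast]
    simp only [hCF]
    ring
  -- summability of A
  have hSCF : Summable CF := by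
    set K : ℝ := 2 * (((1+q+l:ℕ)):ℝ)^q * Real.sqrt ((1+q+l:ℕ):ℝ) with hK
    have hb1 : ∀ n : ℕ, 0 ≤ CF n := by
      intro n
      simp only [hCF]
      apply div_nonneg _ (by positivity)
      exact mul_nonneg (Nat.cast_nonneg _) (sub_nonneg.2 (H_mono (by omega)))
    have hb2 : ∀ n : ℕ, CF n ≤ K * (Real.sqrt ((n:ℝ)+1) / ((n:ℝ)+1)^2) := by
      intro n
      simp only [hCF]
      set x : ℝ := (n:ℝ)+1 with hx
      have hx1 : (1:ℝ) ≤ x := by simp [hx]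
      have hxpos : (0:ℝ) < x := by linarith
      have hcq : (((n+1+q+l).choose q : ℕ):ℝ) ≤ (x * ((1+q+l:ℕ):ℝ))^q := by
        have h1 : ((n+1+q+l).choose q : ℕ) ≤ (n+1+q+l)^q := Nat.choose_le_pow (n+1+q+l) q
        have h2 : (((n+1+q+l)^q : ℕ):ℝ) ≤ (x * ((1+q+l:ℕ):ℝ))^q := by
          push_cast
          apply pow_le_pow_left₀ (by positivity)
          rw [hx]
          push_cast
          nlinarith [Nat.cast_nonneg (α := ℝ) n, Nat.cast_nonneg (α := ℝ) q,
            Nat.cast_nonneg (α := ℝ) l, mul_nonneg (Nat.cast_nonneg (α := ℝ) n) (Nat.cast_nonneg (α := ℝ) q),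
            mul_nonneg (Nat.cast_nonneg (α := ℝ) n) (Nat.cast_nonneg (α := ℝ) l)]
        calc (((n+1+q+l).choose q : ℕ):ℝ) ≤ (((n+1+q+l)^q : ℕ):ℝ) := by exact_mod_cast h1
          _ ≤ _ := h2
      have hD : Hgen 1 (n+1+q+l) - Hgen 1 (q+l)
          ≤ 2 * (Real.sqrt ((1+q+l:ℕ):ℝ) * Real.sqrt x) := by
        have h1 := H_le_sqrt (n+1+q+l)
        have h2 : Real.sqrt ((n+1+q+l:ℕ):ℝ) ≤ Real.sqrt (((1+q+l:ℕ):ℝ) * x) := by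
          apply Real.sqrt_le_sqrt
          rw [hx]
          push_cast
          nlinarith [Nat.cast_nonneg (α := ℝ) n, Nat.cast_nonneg (α := ℝ) q,
            Nat.cast_nonneg (α := ℝ) l, mul_nonneg (Nat.cast_nonneg (α := ℝ) q) (Nat.cast_nonneg (α := ℝ) n),
            mul_nonneg (Nat.cast_nonneg (α := ℝ) l) (Nat.cast_nonneg (α := ℝ) n)]
        rw [Real.sqrt_mul (Nat.cast_nonneg _)] at h2
        have := H_nonneg (q+l)
        linarith
      have hDnn : 0 ≤ Hgen 1 (n+1+q+l) - Hgen 1 (q+l) :=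
        sub_nonneg.2 (H_mono (by omega))
      have hpow : x^(q+2) ≤ x^p := pow_le_pow_right₀ hx1 (by omega)
      calc (((n+1+q+l).choose q : ℕ):ℝ) * (Hgen 1 (n+1+q+l) - Hgen 1 (q+l)) / x^p
          ≤ ((x * ((1+q+l:ℕ):ℝ))^q * (2 * (Real.sqrt ((1+q+l:ℕ):ℝ) * Real.sqrt x))) / x^(q+2) := by
            apply div_le_div₀ (by positivity) _ (by positivity) hpow
            exact mul_le_mul hcq hD hDnn (by positivity)
        _ = K * (Real.sqrt x / x^2) := by
            rw [mul_pow, pow_add]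
            field_simp [hK]
            ring
    exact Summable.of_nonneg_of_le hb1 hb2 (sqrt_bound_summable.mul_left K)
  have hSA : Summable A := hSCF.congr (fun n => (hAeq n).symm)
  -- summability of G parts
  have hSz : ∀ k ∈ Finset.range (q+1),
      Summable (fun n : ℕ => (c k : ℝ) * (1/((n:ℝ)+1)^(p-k))) := by
    intro k hk
    have hkq : k ≤ q := Nat.lt_succ_iff.mp (Finset.mem_range.mp hk)
    have h2 : 2 ≤ p - k := by omega
    have hs : Summable (fun n : ℕ => 1/((n:ℝ))^(p-k)) :=
      Real.summable_one_div_nat_pow.mpr h2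
    have hs2 := (_root_.summable_nat_add_iff 1).mpr hs
    exact ((hs2.congr (fun n => by push_cast; ring)) : Summable
      (fun n : ℕ => 1/((n:ℝ)+1)^(p-k))).mul_left _
  have hSsum : Summable (fun n : ℕ =>
      ∑ k ∈ Finset.range (q+1), (c k : ℝ) * (1/((n:ℝ)+1)^(p-k))) := summable_sum hSz
  have hSG : Summable G := hSsum.mul_left _
  -- assemble
  calc ∑' n : ℕ, ((n+1+q+l).choose q : ℝ) * Hgen 1 (n+1+q+l) / ((n+1:ℕ):ℝ)^p
      = ∑' n : ℕ, (A n + G n) := tsum_congr hpoint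
    _ = (∑' n, A n) + ∑' n, G n := Summable.tsum_add hSA hSG
    _ = _ := by
        rw [hA, hG]
        rw [tsum_mul_left, tsum_mul_left, Summable.tsum_finsetSum hSz]
        congr 1
        congr 1
        apply Finset.sum_congr rfl
        intro k _
        rw [tsum_mul_left, zetaVal]
end

section
/- For every integer r, every non-negative integer m and every integer n ≥ 1, the hyperharmonic numbers satisfy h_n^{(r-m)} = Σ_{k=0}^n C(m,k) (-1)^k h_{n-k}^{(r)} (where h_0^{(r)} = 0 and C(m,k) = 0 for k > m). -/
open Finset

noncomputable def Sh (r n : ℕ) : ℝ :=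
  ∑ k ∈ Finset.range n, (Nat.choose r k : ℝ) * (-1 : ℝ) ^ k / ((n - k : ℕ) : ℝ)

lemma Sh_succ (r m : ℕ) : Sh (r+1) (m+1) = Sh r (m+1) - Sh r m := by
  simp only [Sh]
  rw [Finset.sum_range_succ', Finset.sum_range_succ'
    (fun k => (Nat.choose r k : ℝ) * (-1:ℝ)^k / ((m+1-k : ℕ):ℝ))]
  have h1 : ∀ k ∈ Finset.range m,
      ((r+1).choose (k+1) : ℝ) * (-1:ℝ)^(k+1) / ((m+1-(k+1) : ℕ):ℝ)
      = (r.choose (k+1) : ℝ) * (-1:ℝ)^(k+1) / ((m+1-(k+1) : ℕ):ℝ)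
        - (r.choose k : ℝ) * (-1:ℝ)^k / ((m-k : ℕ):ℝ) := by
    intro k _
    have h : (r+1).choose (k+1) = r.choose k + r.choose (k+1) := Nat.choose_succ_succ r k
    have h2 : (m+1-(k+1) : ℕ) = m - k := by omega
    rw [h, h2]
    push_cast
    ring
  rw [Finset.sum_congr rfl h1, Finset.sum_sub_distrib]
  simp
  ring

lemma Sh_closed (r x : ℕ) : Sh r (x + r + 1)
    = (-1:ℝ)^r / (((x+1 : ℕ):ℝ) * ((x+r+1).choose r : ℝ)) := by
  induction r generalizing x with
  | zero =>
    simp only [Sh, Nat.add_zero, Nat.choose_zero_right, pow_zero]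
    rw [Finset.sum_eq_single 0]
    · simp
    · intro k hk hk0
      have : Nat.choose 0 k = 0 := Nat.choose_eq_zero_of_lt (by omega)
      simp [this]
    · simp
  | succ r ih =>
    have key : x + (r+1) + 1 = (x + r + 1) + 1 := by ring
    rw [key, Sh_succ]
    have e1 := ih (x+1)
    have e2 := ih x
    have h1 : x + 1 + r + 1 = x + r + 2 := by ring
    rw [h1] at e1
    rw [e1, e2]
    -- nat identities
    have n1 : (x+r+1).choose r * (x+r+2) = (x+r+2).choose r * (x+2) := by
      have := Nat.choose_mul_succ_eq (x+r+1) r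
      have h : x + r + 1 + 1 - r = x + 2 := by omega
      rw [h] at this
      convert this using 2 <;> omega
    have n2 : (x+r+2) * (x+r+1).choose r = (x+r+2).choose (r+1) * (r+1) := by
      have := Nat.add_one_mul_choose_eq (x+r+1) r
      simpa using this
    have hA : 0 < (x+r+1).choose r := Nat.choose_pos (by omega)
    have hB : 0 < (x+r+2).choose r := Nat.choose_pos (by omega)
    have hC : 0 < (x+r+2).choose (r+1) := Nat.choose_pos (by omega)
    have cA : ((x+r+1).choose r : ℝ) ≠ 0 := by positivity
    have cB : ((x+r+2).choose r : ℝ) ≠ 0 := by positivity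
    have cC : ((x+r+2).choose (r+1) : ℝ) ≠ 0 := by positivity
    have r1 : ((x+r+1).choose r : ℝ) * (x+r+2) = ((x+r+2).choose r : ℝ) * (x+2) := by
      exact_mod_cast congrArg (Nat.cast : ℕ → ℝ) n1
    have r2 : ((x:ℝ)+r+2) * ((x+r+1).choose r : ℝ) = ((x+r+2).choose (r+1) : ℝ) * (r+1) := by
      exact_mod_cast congrArg (Nat.cast : ℕ → ℝ) n2
    have hx1 : ((x:ℝ)+1) ≠ 0 := by positivity
    have hx2 : ((x:ℝ)+2) ≠ 0 := by positivity
    have hr1 : ((r:ℝ)+1) ≠ 0 := by positivity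
    have eB : ((x+r+2).choose r : ℝ) = ((x+r+1).choose r : ℝ) * ((x:ℝ)+r+2) / ((x:ℝ)+2) := by
      field_simp
      linarith [r1]
    have eC : ((x+r+2).choose (r+1) : ℝ) = ((x+r+1).choose r : ℝ) * ((x:ℝ)+r+2) / ((r:ℝ)+1) := by
      field_simp
      linarith [r2]
    rw [eB, eC]
    push_cast
    have hxr : ((x:ℝ)+r+2) ≠ 0 := by positivity
    field_simp
    ring

lemma hneg_eq_Sh (r n : ℕ) : hneg r n = Sh r n := by
  unfold hneg Sh
  split_ifs with h
  · obtain ⟨x, rfl⟩ : ∃ x, n = x + r + 1 := ⟨n - r - 1, by omega⟩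
    have h2 : (x + r + 1 - r : ℕ) = x + 1 := by omega
    rw [h2, ← Sh_closed]
    rfl
  · rfl

lemma hpos_zero (t : ℕ) : hpos t 0 = 0 := by cases t <;> simp [hpos]

lemma hh_zero (r : ℤ) : hh r 0 = 0 := by
  unfold hh
  split_ifs
  · exact hpos_zero _
  · simp [hneg]

lemma hh_neg_eq (r : ℤ) (hr : r ≤ 0) (n : ℕ) : hh r n = hneg (-r).toNat n := by
  unfold hh
  split_ifs with h
  · have h0 : r = 0 := le_antisymm hr h
    subst h0
    cases n with
    | zero => simp [hpos, hneg]
    | succ m => simp [hpos, hneg]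
  · rfl

lemma hh_step (r : ℤ) (n : ℕ) (hn : 1 ≤ n) : hh (r - 1) n = hh r n - hh r (n-1) := by
  obtain ⟨m, rfl⟩ : ∃ m, n = m + 1 := ⟨n-1, by omega⟩
  rcases le_or_gt 1 r with hr | hr
  · obtain ⟨t, rfl⟩ : ∃ t : ℕ, r = (t : ℤ) + 1 := ⟨(r-1).toNat, by omega⟩
    have h1 : hh ((t:ℤ) + 1 - 1) (m+1) = hpos t (m+1) := by
      have : (t:ℤ) + 1 - 1 = (t:ℤ) := by ring
      rw [this]
      simp [hh]
    have h2 : ∀ j, hh ((t:ℤ)+1) j = hpos (t+1) j := by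
      intro j
      have ht : ((t:ℤ)+1).toNat = t + 1 := by omega
      unfold hh
      rw [if_pos (by positivity : (0:ℤ) ≤ (t:ℤ)+1), ht]
    rw [h1, h2, h2]
    show hpos t (m+1) = (∑ k ∈ Finset.Icc 1 (m+1), hpos t k) - ∑ k ∈ Finset.Icc 1 (m+1-1), hpos t k
    rw [Finset.sum_Icc_succ_top (by omega : 1 ≤ m+1)]
    simp
  · have hr0 : r ≤ 0 := by omega
    rw [hh_neg_eq _ hr0, hh_neg_eq _ hr0, hh_neg_eq _ (by omega : r - 1 ≤ 0)]
    have h3 : (-(r-1)).toNat = (-r).toNat + 1 := by omega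
    rw [h3, hneg_eq_Sh, hneg_eq_Sh, hneg_eq_Sh]
    have h4 : m + 1 - 1 = m := rfl
    rw [h4]
    exact Sh_succ _ m

theorem stmt13 (r : ℤ) (m : ℕ) (n : ℕ) (hn : 1 ≤ n) :
    hh (r - (m : ℤ)) n = ∑ k ∈ Finset.range (n + 1),
      (Nat.choose m k : ℝ) * (-1 : ℝ) ^ k * hh r (n - k) := by
  induction m generalizing r with
  | zero =>
    rw [Finset.sum_eq_single 0]
    · simp
    · intro k hk hk0
      have : Nat.choose 0 k = 0 := Nat.choose_eq_zero_of_lt (by omega)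
      simp [this]
    · simp
  | succ m ih =>
    have step : hh (r - ((m:ℤ)+1)) n = ∑ k ∈ Finset.range (n+1),
        (Nat.choose m k : ℝ) * (-1:ℝ)^k * hh (r-1) (n-k) := by
      have h := ih (r - 1)
      have hr : r - 1 - (m:ℤ) = r - ((m:ℤ) + 1) := by ring
      rw [hr] at h
      exact h
    have hcast : r - ((m+1 : ℕ) : ℤ) = r - ((m:ℤ)+1) := by push_cast; ring
    rw [hcast, step]
    have expand : ∀ k ∈ Finset.range (n+1),
        (Nat.choose m k : ℝ) * (-1:ℝ)^k * hh (r-1) (n-k)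
        = (Nat.choose m k : ℝ) * (-1:ℝ)^k * hh r (n-k)
          - (Nat.choose m k : ℝ) * (-1:ℝ)^k * hh r (n-k-1) := by
      intro k hk
      rcases Nat.lt_or_ge k n with h | h
      · rw [hh_step r (n-k) (by omega)]; ring
      · have hk' : k = n := by simp at hk; omega
        subst hk'
        simp [Nat.sub_self, hh_zero]
    rw [Finset.sum_congr rfl expand, Finset.sum_sub_distrib]
    rw [Finset.sum_range_succ' (fun k => (Nat.choose (m+1) k : ℝ) * (-1:ℝ)^k * hh r (n-k))]
    rw [Finset.sum_range_succ' (fun k => (Nat.choose m k : ℝ) * (-1:ℝ)^k * hh r (n-k))]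
    rw [Finset.sum_range_succ (fun k => (Nat.choose m k : ℝ) * (-1:ℝ)^k * hh r (n-k-1))]
    have last : (Nat.choose m n : ℝ) * (-1:ℝ)^n * hh r (n-n-1) = 0 := by
      have : n - n - 1 = 0 := by omega
      rw [this, hh_zero]; ring
    rw [last, add_zero]
    have pascal : ∀ k ∈ Finset.range n,
        ((m+1).choose (k+1) : ℝ) * (-1:ℝ)^(k+1) * hh r (n-(k+1))
        = (m.choose (k+1) : ℝ) * (-1:ℝ)^(k+1) * hh r (n-(k+1))
          - (m.choose k : ℝ) * (-1:ℝ)^k * hh r (n-k-1) := by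
      intro k _
      have h : (m+1).choose (k+1) = m.choose k + m.choose (k+1) := Nat.choose_succ_succ m k
      have h2 : n - (k+1) = n - k - 1 := by omega
      rw [h, h2]
      push_cast
      ring
    rw [Finset.sum_congr rfl pascal, Finset.sum_sub_distrib]
    simp
    ring
end
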